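/- arXiv:1906.09729 — 7 statements merged into one kernel-verified Lean document; each statement's English description precedes it below -/
import Mathlib

section
/- Let L be an integrable real random variable on a probability space (Ω,𝓕,P), let 0 < a < 1 and 0 ≤ b < 1, and set λ(a,b) = (1−a)/(1−ab). Then the infimum defining the optimized certainty equivalent R_{a,b}(L) = inf{ m + E[ℓ_{a,b}(L−m)] : m ∈ ℝ } is attained at m* = q_L(λ(a,b)); that is, R_{a,b}(L) = q_L(λ(a,b)) + E[ℓ_{a,b}(L − q_L(λ(a,b)))]. -/
open MeasureTheory Filter Topology Real Set
open scoped ENNReal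

/-- Left-quantile function: `q_L(u) = inf {m : P[L ≤ m] ≥ u}`. -/
noncomputable def leftQuantile {Ω : Type*} [MeasurableSpace Ω] (P : Measure Ω)
    (L : Ω → ℝ) (u : ℝ) : ℝ :=
  sInf {m : ℝ | u ≤ (P {ω | L ω ≤ m}).toReal}

/-- Expected shortfall: `ES_α(L) = (1/(1-α)) ∫_α^1 q_L(u) du`. -/
noncomputable def ES {Ω : Type*} [MeasurableSpace Ω] (P : Measure Ω)
    (L : Ω → ℝ) (α : ℝ) : ℝ :=
  (1 - α)⁻¹ * ∫ u in α..1, leftQuantile P L u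

/-- The α-expectile is the (unique) `e` with `α E[(L-e)⁺] = (1-α) E[(L-e)⁻]`. -/
def IsExpectile {Ω : Type*} [MeasurableSpace Ω] (P : Measure Ω)
    (L : Ω → ℝ) (α e : ℝ) : Prop :=
  α * ∫ ω, max (L ω - e) 0 ∂P = (1 - α) * ∫ ω, max (e - L ω) 0 ∂P

/-- Loss function `ℓ_{a,b}(x) = x⁺/a - b x⁻`. -/
noncomputable def lossFn (a b x : ℝ) : ℝ := max x 0 / a - b * max (-x) 0

/-- Optimized certainty equivalent `R_{a,b}(L) = inf { m + E[ℓ_{a,b}(L-m)] }`. -/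
noncomputable def OCE {Ω : Type*} [MeasurableSpace Ω] (P : Measure Ω)
    (L : Ω → ℝ) (a b : ℝ) : ℝ :=
  sInf {r : ℝ | ∃ m : ℝ, r = m + ∫ ω, lossFn a b (L ω - m) ∂P}

/-- `g` is regularly varying at infinity with index `ρ`. -/
def RegularlyVarying (g : ℝ → ℝ) (ρ : ℝ) : Prop :=
  ∀ x : ℝ, 0 < x → Tendsto (fun t => g (t * x) / g t) atTop (𝓝 (x ^ ρ))

/-- `g` is of second-order regular variation with indices `-η`, `ρ` and auxiliary function `A`. -/
def SecondOrderRV (g : ℝ → ℝ) (η ρ : ℝ) (A : ℝ → ℝ) : Prop :=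
  RegularlyVarying g (-η) ∧
  Tendsto A atTop (𝓝 0) ∧
  ((∀ᶠ t in atTop, 0 < A t) ∨ (∀ᶠ t in atTop, A t < 0)) ∧
  ∀ x : ℝ, 0 < x →
    Tendsto (fun t => (g (t * x) / g t - x ^ (-η)) / A t) atTop
      (𝓝 (if ρ = 0 then x ^ (-η) * Real.log x else x ^ (-η) * (x ^ ρ - 1) / ρ))

/-- Empirical measure `(1/n) ∑_{k<n} δ_{L_k(ω)}` of the first `n` samples. -/
noncomputable def empMeasure {Ω : Type*} [MeasurableSpace Ω] (L : ℕ → Ω → ℝ)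
    (n : ℕ) (ω : Ω) : Measure ℝ :=
  (n : ℝ≥0∞)⁻¹ • ∑ k ∈ Finset.range n, Measure.dirac (L k ω)

section Aux

open ProbabilityTheory

private lemma lossFn_eq (a b x : ℝ) (ha : a ≠ 0) :
    lossFn a b x = b * x + (1 / a - b) * max x 0 := by
  have hneg : max (-x) 0 = max x 0 - x := by
    rcases le_total x 0 with h | h
    · rw [max_eq_left (neg_nonneg.2 h), max_eq_right h]; ring
    · rw [max_eq_right (neg_nonpos.2 h), max_eq_left h]; ring
  rw [lossFn, hneg]
  field_simp
  ring

private lemma pointwise_ge (q m x : ℝ) (hqm : q ≤ m) :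
    max (x - q) 0 - max (x - m) 0 ≤ (if q < x then m - q else 0) := by
  have h1 : x - m ≤ max (x - m) 0 := le_max_left _ _
  have h2 : (0:ℝ) ≤ max (x - m) 0 := le_max_right _ _
  split_ifs with h
  · rcases le_total (x - q) 0 with h' | h'
    · rw [max_eq_right h']; linarith
    · rw [max_eq_left h']; linarith
  · push_neg at h
    rw [max_eq_right (by linarith : x - q ≤ 0)]; linarith

private lemma pointwise_le (q m x : ℝ) (hmq : m ≤ q) :
    max (x - q) 0 + (if q ≤ x then q - m else 0) ≤ max (x - m) 0 := by
  have h1 : x - m ≤ max (x - m) 0 := le_max_left _ _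
  have h2 : (0:ℝ) ≤ max (x - m) 0 := le_max_right _ _
  split_ifs with h
  · rw [max_eq_left (by linarith : (0:ℝ) ≤ x - q)]; linarith
  · push_neg at h
    rw [max_eq_right (by linarith : x - q ≤ 0)]; linarith

/-- The key theorem for a genuinely measurable `L`. -/
private lemma oce_attained_at_quantile_meas {Ω : Type*} [MeasurableSpace Ω] (P : Measure Ω)
    [IsProbabilityMeasure P] (L : Ω → ℝ) (hL : Integrable L P) (hmeas : Measurable L)
    (a b : ℝ) (ha : 0 < a) (ha1 : a < 1) (hb : 0 ≤ b) (hb1 : b < 1) :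
    OCE P L a b =
      leftQuantile P L ((1 - a) / (1 - a * b)) +
        ∫ ω, lossFn a b (L ω - leftQuantile P L ((1 - a) / (1 - a * b))) ∂P := by
  have ha0 : a ≠ 0 := ne_of_gt ha
  have hab : a * b < 1 := by nlinarith
  have hab' : (0:ℝ) < 1 - a * b := by linarith
  set lam : ℝ := (1 - a) / (1 - a * b) with hlam_def
  have hlam0 : 0 < lam := div_pos (by linarith) hab'
  have hlam1 : lam < 1 := by
    rw [hlam_def, div_lt_one hab']; nlinarith
  set c : ℝ := 1 / a - b with hc_def
  have hc0 : 0 < c := by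
    have h1a : b < 1 / a := by
      rw [lt_div_iff₀ ha]; nlinarith
    rw [hc_def]; linarith
  have hkey : c * (1 - lam) = 1 - b := by
    rw [hc_def, hlam_def]; field_simp; ring
  -- the pushforward measure and its cdf
  set μ : Measure ℝ := P.map L with hμ_def
  haveI : IsProbabilityMeasure μ := Measure.isProbabilityMeasure_map hmeas.aemeasurable
  have hmap : ∀ s : Set ℝ, MeasurableSet s → μ s = P (L ⁻¹' s) := fun s hs =>
    Measure.map_apply hmeas hs
  set F : StieltjesFunction ℝ := cdf μ with hF_def
  have hFcdf : ∀ m : ℝ, (P {ω | L ω ≤ m}).toReal = F m := by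
    intro m
    rw [hF_def, cdf_eq_real, Measure.real, hmap _ measurableSet_Iic]
    rfl
  -- the quantile
  set q : ℝ := leftQuantile P L lam with hq
  set S : Set ℝ := {m : ℝ | lam ≤ F m} with hS_def
  have hqS : q = sInf S := by
    rw [hq, hS_def, leftQuantile]
    congr 1
    ext m
    simp [hFcdf m]
  have hSne : S.Nonempty := by
    have : ∀ᶠ m in atTop, lam ≤ F m :=
      (tendsto_cdf_atTop μ).eventually (eventually_ge_nhds hlam1)
    exact this.exists
  have hSbdd : BddBelow S := by
    have : ∀ᶠ m in atBot, F m < lam :=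
      (tendsto_cdf_atBot μ).eventually (eventually_lt_nhds hlam0)
    obtain ⟨M, hM⟩ := eventually_atBot.1 this
    exact ⟨M, fun s hs => by
      by_contra hcon
      push_neg at hcon
      exact absurd hs (not_le.2 (hM s (le_of_lt hcon)))⟩
  -- fact 1 : lam ≤ F q
  have hFq : lam ≤ F q := by
    have hmono : ∀ m, q < m → lam ≤ F m := by
      intro m hm
      rw [hqS] at hm
      obtain ⟨s, hsS, hsm⟩ := (csInf_lt_iff hSbdd hSne).1 hm
      exact le_trans hsS (monotone_cdf μ (le_of_lt hsm))
    have hrc : Tendsto F (𝓝[>] q) (𝓝 (F q)) :=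
      (F.right_continuous q).tendsto.mono_left (nhdsWithin_mono q Ioi_subset_Ici_self)
    exact ge_of_tendsto hrc (eventually_nhdsWithin_of_forall fun m hm => hmono m hm)
  -- fact 2 : (μ (Iio q)).toReal ≤ lam
  have hIio : (μ (Iio q)).toReal ≤ lam := by
    have hlt : ∀ m, m < q → F m < lam := by
      intro m hm
      by_contra hcon
      push_neg at hcon
      have : q ≤ m := hqS ▸ csInf_le hSbdd hcon
      linarith
    have hunion : (⋃ n : ℕ, Iic (q - 1 / (n + 1))) = Iio q := by
      ext x
      simp only [mem_iUnion, mem_Iic, mem_Iio]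
      constructor
      · rintro ⟨n, hn⟩
        have : (0:ℝ) < 1 / (n + 1) := by positivity
        linarith
      · intro hx
        obtain ⟨n, hn⟩ := exists_nat_one_div_lt (by linarith : (0:ℝ) < q - x)
        exact ⟨n, by linarith⟩
    have hmono : Monotone fun n : ℕ => Iic (q - 1 / (n + 1)) := by
      intro n k hnk
      apply Iic_subset_Iic.2
      have h1 : (1:ℝ) / (k + 1) ≤ 1 / (n + 1) := by
        apply one_div_le_one_div_of_le (by positivity)
        exact_mod_cast by exact_mod_cast add_le_add_left (Nat.cast_le.2 hnk) 1
      linarith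
    have htend : Tendsto (fun n : ℕ => μ (Iic (q - 1 / (n + 1)))) atTop (𝓝 (μ (Iio q))) := by
      have := tendsto_measure_iUnion_atTop (μ := μ) hmono
      rwa [hunion] at this
    have hle : μ (Iio q) ≤ ENNReal.ofReal lam := by
      refine le_of_tendsto htend (Eventually.of_forall fun n => ?_)
      have hflt : F (q - 1 / (n + 1)) < lam := hlt _ (by
        have : (0:ℝ) < 1 / (n + 1) := by positivity
        linarith)
      rw [← ofReal_cdf μ]
      exact ENNReal.ofReal_le_ofReal (le_of_lt hflt)
    calc (μ (Iio q)).toReal ≤ (ENNReal.ofReal lam).toReal :=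
          ENNReal.toReal_mono ENNReal.ofReal_ne_top hle
      _ = lam := ENNReal.toReal_ofReal (le_of_lt hlam0)
  -- integrability
  have hint_max : ∀ m : ℝ, Integrable (fun ω => max (L ω - m) 0) P := fun m =>
    (hL.sub (integrable_const m)).pos_part
  have hint_loss : ∀ m : ℝ, Integrable (fun ω => lossFn a b (L ω - m)) P := by
    intro m
    have : (fun ω => lossFn a b (L ω - m)) =
        fun ω => b * (L ω - m) + c * max (L ω - m) 0 := by
      funext ω; rw [lossFn_eq a b _ ha0, hc_def]
    rw [this]
    exact (((hL.sub (integrable_const m)).const_mul b)).add ((hint_max m).const_mul c)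
  -- the objective function
  have hobj : ∀ m : ℝ, (m + ∫ ω, lossFn a b (L ω - m) ∂P) =
      (1 - b) * m + b * (∫ ω, L ω ∂P) + c * ∫ ω, max (L ω - m) 0 ∂P := by
    intro m
    have h1 : (fun ω => lossFn a b (L ω - m)) =
        fun ω => b * (L ω - m) + c * max (L ω - m) 0 := by
      funext ω; rw [lossFn_eq a b _ ha0, hc_def]
    have hsub : Integrable (fun ω => L ω - m) P := hL.sub (integrable_const m)
    have hi1 : Integrable (fun ω => b * (L ω - m)) P := hsub.const_mul b
    have hi2 : Integrable (fun ω => c * max (L ω - m) 0) P := (hint_max m).const_mul c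
    rw [h1, integral_add hi1 hi2, integral_const_mul, integral_const_mul,
      integral_sub hL (integrable_const m), integral_const, probReal_univ]
    simp only [ENNReal.toReal_one, smul_eq_mul, one_mul]
    ring
  -- probabilities of tails at q
  have hmeasLe : MeasurableSet {ω | L ω ≤ q} := hmeas measurableSet_Iic
  have hgt_toReal : (P {ω | q < L ω}).toReal = 1 - F q := by
    have hcompl : {ω | q < L ω} = {ω | L ω ≤ q}ᶜ := by
      ext ω; simp [not_le]
    have hsum : P {ω | L ω ≤ q} + P {ω | q < L ω} = 1 := by
      rw [hcompl]; exact prob_add_prob_compl hmeasLe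
    have h1 : (P {ω | L ω ≤ q}).toReal + (P {ω | q < L ω}).toReal = 1 := by
      rw [← ENNReal.toReal_add (measure_ne_top _ _) (measure_ne_top _ _), hsum]
      simp
    rw [hFcdf q] at h1
    linarith
  have hge_toReal : 1 - lam ≤ (P {ω | q ≤ L ω}).toReal := by
    have hcompl : {ω | q ≤ L ω} = {ω | L ω < q}ᶜ := by
      ext ω; simp [not_lt]
    have hmeasLt : MeasurableSet {ω | L ω < q} := hmeas measurableSet_Iio
    have hsum : P {ω | L ω < q} + P {ω | q ≤ L ω} = 1 := by
      rw [hcompl]; exact prob_add_prob_compl hmeasLt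
    have h1 : (P {ω | L ω < q}).toReal + (P {ω | q ≤ L ω}).toReal = 1 := by
      rw [← ENNReal.toReal_add (measure_ne_top _ _) (measure_ne_top _ _), hsum]
      simp
    have h2 : (P {ω | L ω < q}).toReal ≤ lam := by
      have : P {ω | L ω < q} = μ (Iio q) := by
        rw [hmap _ measurableSet_Iio]; rfl
      rw [this]; exact hIio
    linarith
  -- key inequality : objective at q is ≤ objective at any m
  have hkey_ineq : ∀ m : ℝ,
      (q + ∫ ω, lossFn a b (L ω - q) ∂P) ≤ (m + ∫ ω, lossFn a b (L ω - m) ∂P) := by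
    intro m
    rw [hobj q, hobj m]
    rcases le_total q m with hqm | hmq
    · -- case q ≤ m
      have hptwise : ∀ ω, max (L ω - q) 0 - max (L ω - m) 0 ≤
          Set.indicator {ω' | q < L ω'} (fun _ => m - q) ω := by
        intro ω
        rw [Set.indicator_apply]
        simpa [Set.mem_setOf_eq] using pointwise_ge q m (L ω) hqm
      have hmeasGt : MeasurableSet {ω | q < L ω} := hmeas measurableSet_Ioi
      have hind_int : Integrable (Set.indicator {ω' | q < L ω'} fun _ => m - q) P :=
        (integrable_const (m - q)).indicator hmeasGt
      have hIq_Im : (∫ ω, max (L ω - q) 0 ∂P) - (∫ ω, max (L ω - m) 0 ∂P) ≤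
          (m - q) * (P {ω | q < L ω}).toReal := by
        rw [← integral_sub (hint_max q) (hint_max m)]
        calc (∫ ω, (max (L ω - q) 0 - max (L ω - m) 0) ∂P)
            ≤ ∫ ω, Set.indicator {ω' | q < L ω'} (fun _ => m - q) ω ∂P :=
              integral_mono ((hint_max q).sub (hint_max m)) hind_int hptwise
          _ = (P {ω | q < L ω}).toReal • (m - q) := integral_indicator_const _ hmeasGt
          _ = (m - q) * (P {ω | q < L ω}).toReal := by rw [smul_eq_mul]; ring
      rw [hgt_toReal] at hIq_Im
      have hFqle : 1 - F q ≤ 1 - lam := by linarith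
      have hc_ineq : c * (1 - F q) ≤ 1 - b := by
        calc c * (1 - F q) ≤ c * (1 - lam) := by
              apply mul_le_mul_of_nonneg_left hFqle (le_of_lt hc0)
          _ = 1 - b := hkey
      nlinarith [mul_le_mul_of_nonneg_left hIq_Im (le_of_lt hc0),
        mul_le_mul_of_nonneg_left hc_ineq (by linarith : (0:ℝ) ≤ m - q)]
    · -- case m ≤ q
      have hptwise : ∀ ω, max (L ω - q) 0 +
          Set.indicator {ω' | q ≤ L ω'} (fun _ => q - m) ω ≤ max (L ω - m) 0 := by
        intro ω
        rw [Set.indicator_apply]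
        simpa [Set.mem_setOf_eq] using pointwise_le q m (L ω) hmq
      have hmeasGe : MeasurableSet {ω | q ≤ L ω} := hmeas measurableSet_Ici
      have hind_int : Integrable (Set.indicator {ω' | q ≤ L ω'} fun _ => q - m) P :=
        (integrable_const (q - m)).indicator hmeasGe
      have hIm_Iq : (∫ ω, max (L ω - q) 0 ∂P) + (q - m) * (P {ω | q ≤ L ω}).toReal ≤
          (∫ ω, max (L ω - m) 0 ∂P) := by
        have hi1 : Integrable (fun ω => max (L ω - q) 0 +
            Set.indicator {ω' | q ≤ L ω'} (fun _ => q - m) ω) P := (hint_max q).add hind_int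
        have := integral_mono hi1 (hint_max m) hptwise
        rw [integral_add (hint_max q) hind_int, integral_indicator_const _ hmeasGe] at this
        calc (∫ ω, max (L ω - q) 0 ∂P) + (q - m) * (P {ω | q ≤ L ω}).toReal
            = (∫ ω, max (L ω - q) 0 ∂P) + (P {ω | q ≤ L ω}).toReal • (q - m) := by
              rw [smul_eq_mul]; ring
          _ ≤ _ := this
      have hc_ineq : 1 - b ≤ c * (P {ω | q ≤ L ω}).toReal := by
        calc (1:ℝ) - b = c * (1 - lam) := hkey.symm
          _ ≤ c * (P {ω | q ≤ L ω}).toReal :=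
              mul_le_mul_of_nonneg_left hge_toReal (le_of_lt hc0)
      nlinarith [mul_le_mul_of_nonneg_left hIm_Iq (le_of_lt hc0),
        mul_le_mul_of_nonneg_left hc_ineq (by linarith : (0:ℝ) ≤ q - m)]
  -- conclude
  have hleast : IsLeast {r : ℝ | ∃ m : ℝ, r = m + ∫ ω, lossFn a b (L ω - m) ∂P}
      (q + ∫ ω, lossFn a b (L ω - q) ∂P) := by
    constructor
    · exact ⟨q, rfl⟩
    · rintro r ⟨m, rfl⟩
      exact hkey_ineq m
  rw [OCE, hleast.csInf_eq]

end Aux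

/-- the infimum defining the optimized certainty equivalent is attained
at `m* = q_L(λ(a,b))` with `λ(a,b) = (1-a)/(1-a*b)`. -/
theorem oce_attained_at_quantile {Ω : Type*} [MeasurableSpace Ω] (P : Measure Ω)
    [IsProbabilityMeasure P] (L : Ω → ℝ) (hL : Integrable L P)
    (a b : ℝ) (ha : 0 < a) (ha1 : a < 1) (hb : 0 ≤ b) (hb1 : b < 1) :
    OCE P L a b =
      leftQuantile P L ((1 - a) / (1 - a * b)) +
        ∫ ω, lossFn a b (L ω - leftQuantile P L ((1 - a) / (1 - a * b))) ∂P := by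
  -- replace `L` by a measurable representative
  set L' : Ω → ℝ := hL.1.mk L with hL'_def
  have hae : L =ᵐ[P] L' := hL.1.ae_eq_mk
  have hmeas' : Measurable L' := hL.1.stronglyMeasurable_mk.measurable
  have hL' : Integrable L' P := hL.congr hae
  have hq_eq : ∀ u : ℝ, leftQuantile P L u = leftQuantile P L' u := by
    intro u
    unfold leftQuantile
    congr 1
    ext m
    have : P {ω | L ω ≤ m} = P {ω | L' ω ≤ m} := by
      apply measure_congr
      filter_upwards [hae] with ω hω
      show (L ω ≤ m) = (L' ω ≤ m)
      rw [hω]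
    simp [this]
  have hint_eq : ∀ m : ℝ,
      (∫ ω, lossFn a b (L ω - m) ∂P) = ∫ ω, lossFn a b (L' ω - m) ∂P := by
    intro m
    apply integral_congr_ae
    filter_upwards [hae] with ω hω
    rw [hω]
  have hOCE_eq : OCE P L a b = OCE P L' a b := by
    unfold OCE
    congr 1
    ext r
    constructor
    · rintro ⟨m, rfl⟩; exact ⟨m, by rw [hint_eq]⟩
    · rintro ⟨m, rfl⟩; exact ⟨m, by rw [hint_eq]⟩
  rw [hOCE_eq, hq_eq, hint_eq,
    oce_attained_at_quantile_meas P L' hL' hmeas' a b ha ha1 hb hb1]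
end

section
/- Let L be an integrable real random variable on a probability space (Ω,𝓕,P) and let 0 < a < 1 and 0 ≤ b ≤ 1. Then the optimized certainty equivalent admits the dual representation R_{a,b}(L) = sup{ E[Z·L] : Z is a random variable with E[Z] = 1 and b ≤ Z ≤ 1/a almost surely }. -/
open MeasureTheory Filter Topology Real Set
open scoped ENNReal

section OCEAux

lemma lossFn_abs_le {a b : ℝ} (ha : 0 < a) (hb : 0 ≤ b) (hb1 : b ≤ 1) (ha1 : a < 1) (x : ℝ) :
    |lossFn a b x| ≤ |x| / a := by
  have h1a : 1 ≤ 1/a := by rw [le_div_iff₀ ha]; linarith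
  unfold lossFn
  rcases le_or_gt x 0 with h | h
  · rw [max_eq_right h, max_eq_left (by linarith : (0:ℝ) ≤ -x)]
    rw [abs_of_nonpos (by rw [zero_div]; nlinarith : (0:ℝ)/a - b * -x ≤ 0)]
    rw [abs_of_nonpos h]
    have : b * -x ≤ (1/a) * -x := by
      apply mul_le_mul_of_nonneg_right (le_trans hb1 h1a) (by linarith)
    rw [zero_div]
    calc -(0 - b * -x) = b * -x := by ring
    _ ≤ (1/a) * -x := this
    _ = -x / a := by ring
  · rw [max_eq_left h.le, max_eq_right (by linarith : -x ≤ (0:ℝ))]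
    rw [abs_of_nonneg (by have := div_pos h ha; nlinarith : (0:ℝ) ≤ x/a - b * 0)]
    rw [abs_of_pos h]
    nlinarith [div_pos h ha]

lemma mul_le_lossFn {a b z x : ℝ} (ha : 0 < a) (hz1 : b ≤ z) (hz2 : z ≤ 1/a) :
    z * x ≤ lossFn a b x := by
  unfold lossFn
  rcases le_or_gt x 0 with h | h
  · rw [max_eq_right h, max_eq_left (by linarith : (0:ℝ) ≤ -x)]
    have : z * x ≤ b * x := mul_le_mul_of_nonpos_right hz1 h
    rw [zero_div]; linarith
  · rw [max_eq_left h.le, max_eq_right (by linarith : -x ≤ (0:ℝ))]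
    have : z * x ≤ (1/a) * x := mul_le_mul_of_nonneg_right hz2 h.le
    calc z * x ≤ (1/a) * x := this
    _ = x / a - b * 0 := by ring

lemma lossFn_one {a : ℝ} (ha : 0 < a) (x : ℝ) : lossFn a 1 x = x + (1/a - 1) * max x 0 := by
  unfold lossFn
  rcases le_or_gt x 0 with h | h
  · rw [max_eq_right h, max_eq_left (by linarith : (0:ℝ) ≤ -x)]
    field_simp
    ring
  · rw [max_eq_left h.le, max_eq_right (by linarith : -x ≤ (0:ℝ))]
    field_simp; ring

lemma continuous_lossFn (a b : ℝ) : Continuous (lossFn a b) := by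
  unfold lossFn; fun_prop

section
variable {Ω : Type*} [MeasurableSpace Ω] {P : Measure Ω} [IsProbabilityMeasure P]

lemma integrable_lossFn {L : Ω → ℝ} (hL : Integrable L P) {a b : ℝ} (ha : 0 < a)
    (ha1 : a < 1) (hb : 0 ≤ b) (hb1 : b ≤ 1) (m : ℝ) :
    Integrable (fun ω => lossFn a b (L ω - m)) P := by
  apply Integrable.mono' (((hL.sub (integrable_const m)).abs).div_const a)
  · exact (continuous_lossFn a b).comp_aestronglyMeasurable
      (hL.sub (integrable_const m)).aestronglyMeasurable
  · refine ae_of_all _ fun ω => ?_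
    simpa [Real.norm_eq_abs, abs_div, abs_of_pos ha] using lossFn_abs_le ha hb hb1 ha1 (L ω - m)

lemma key_le {L : Ω → ℝ} (hL : Integrable L P) {a b : ℝ} (ha : 0 < a)
    (ha1 : a < 1) (hb : 0 ≤ b) (hb1 : b ≤ 1) (m : ℝ) (Z : Ω → ℝ) (hZm : Measurable Z)
    (hZ1 : (∫ ω, Z ω ∂P) = 1) (hZb : ∀ᵐ ω ∂P, b ≤ Z ω ∧ Z ω ≤ 1 / a) :
    ∫ ω, Z ω * L ω ∂P ≤ m + ∫ ω, lossFn a b (L ω - m) ∂P := by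
  have hZabs : ∀ᵐ ω ∂P, |Z ω| ≤ 1/a := by
    filter_upwards [hZb] with ω hω
    rw [abs_of_nonneg (le_trans hb hω.1)]; exact hω.2
  have hZint : Integrable Z P := by
    apply Integrable.mono' (integrable_const (1/a)) hZm.aestronglyMeasurable
    simpa [Real.norm_eq_abs] using hZabs
  have hZLm : Integrable (fun ω => Z ω * (L ω - m)) P := by
    apply Integrable.mono' (((hL.sub (integrable_const m)).abs).div_const a)
    · exact (hZm.aestronglyMeasurable.mul (hL.sub (integrable_const m)).aestronglyMeasurable)
    · filter_upwards [hZabs] with ω hω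
      simp only [Real.norm_eq_abs, Pi.sub_apply, abs_mul]
      calc |Z ω| * |L ω - m| ≤ (1/a) * |L ω - m| :=
            mul_le_mul_of_nonneg_right hω (abs_nonneg _)
        _ = |L ω - m| / a := by ring
  have h1 : (fun ω => Z ω * L ω) = fun ω => Z ω * (L ω - m) + m * Z ω := by
    funext ω; ring
  have h2 : ∫ ω, Z ω * (L ω - m) ∂P ≤ ∫ ω, lossFn a b (L ω - m) ∂P := by
    apply integral_mono_ae hZLm (integrable_lossFn hL ha ha1 hb hb1 m)
    filter_upwards [hZb] with ω hω
    exact mul_le_lossFn ha hω.1 hω.2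
  rw [h1, integral_add hZLm (hZint.const_mul m), integral_const_mul, hZ1]
  linarith

end


section
variable {Ω : Type*} [MeasurableSpace Ω] (P : Measure Ω) [IsProbabilityMeasure P]

lemma quantile_exists (L' : Ω → ℝ) (hmL : Measurable L') {u : ℝ} (hu0 : 0 < u) (hu1 : u < 1) :
    ∃ m : ℝ, u ≤ (P {ω | L' ω ≤ m}).toReal ∧ (P {ω | L' ω < m}).toReal ≤ u := by
  set F : ℝ → ℝ := fun m => (P {ω | L' ω ≤ m}).toReal with hF
  have hFmono : Monotone F := by
    intro x y hxy
    exact ENNReal.toReal_mono (measure_ne_top P _)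
      (measure_mono fun ω hω => le_trans hω hxy)
  have htoReal : ∀ (s : ℕ → Set Ω) (t : Set Ω), Tendsto (P ∘ s) atTop (𝓝 (P t)) →
      Tendsto (fun n => (P (s n)).toReal) atTop (𝓝 ((P t).toReal)) := fun s t h =>
    (ENNReal.tendsto_toReal (measure_ne_top P t)).comp h
  -- S' nonempty
  have hS'ne : ∃ m : ℝ, u ≤ F m := by
    have hun : (⋃ n : ℕ, {ω | L' ω ≤ (n:ℝ)}) = univ := by
      ext ω; simp only [mem_iUnion, mem_univ, iff_true, mem_setOf_eq]
      exact exists_nat_ge (L' ω)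
    have h1 : Tendsto (fun n : ℕ => (P {ω | L' ω ≤ (n:ℝ)}).toReal) atTop (𝓝 1) := by
      have := tendsto_measure_iUnion_atTop (μ := P)
        (s := fun n : ℕ => {ω | L' ω ≤ (n:ℝ)})
        (fun i j hij ω hω => by
          simp only [mem_setOf_eq] at hω ⊢
          exact le_trans hω (by exact_mod_cast hij))
      rw [hun] at this
      simpa using htoReal _ _ this
    obtain ⟨n, hn⟩ := (h1.eventually (eventually_gt_nhds hu1)).exists
    exact ⟨n, hn.le⟩
  obtain ⟨m₁, hm₁⟩ := hS'ne
  -- S' bounded below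
  have hS'bdd : BddBelow {m : ℝ | u ≤ F m} := by
    have hin : (⋂ n : ℕ, {ω | L' ω ≤ -(n:ℝ)}) = ∅ := by
      ext ω; simp only [mem_iInter, mem_setOf_eq, mem_empty_iff_false, iff_false, not_forall]
      obtain ⟨n, hn⟩ := exists_nat_gt (-L' ω)
      exact ⟨n, by push_neg; linarith⟩
    have h2 : Tendsto (fun n : ℕ => (P {ω | L' ω ≤ -(n:ℝ)}).toReal) atTop (𝓝 0) := by
      have := tendsto_measure_iInter_atTop (μ := P)
        (s := fun n : ℕ => {ω | L' ω ≤ -(n:ℝ)})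
        (fun n => (hmL measurableSet_Iic).nullMeasurableSet)
        (fun i j hij ω hω => by
          simp only [mem_setOf_eq] at hω ⊢
          have : (i:ℝ) ≤ (j:ℝ) := by exact_mod_cast hij
          linarith)
        ⟨0, measure_ne_top P _⟩
      rw [hin] at this
      simpa using htoReal _ _ this
    obtain ⟨n, hn⟩ := (h2.eventually (eventually_lt_nhds hu0)).exists
    refine ⟨-(n:ℝ), fun s hs => ?_⟩
    by_contra hlt
    push_neg at hlt
    exact absurd (le_trans hs (hFmono hlt.le)) (not_le.mpr hn)
  set m := sInf {m : ℝ | u ≤ F m} with hmdef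
  refine ⟨m, ?_, ?_⟩
  · -- u ≤ F m by right continuity
    have hanti : Antitone (fun n : ℕ => {ω | L' ω ≤ m + 1/((n:ℝ)+1)}) := by
      intro i j hij ω hω
      simp only [mem_setOf_eq] at hω ⊢
      have : 1/((j:ℝ)+1) ≤ 1/((i:ℝ)+1) := by
        apply one_div_le_one_div_of_le (by positivity)
        have : (i:ℝ) ≤ (j:ℝ) := by exact_mod_cast hij
        linarith
      linarith
    have hint : (⋂ n : ℕ, {ω | L' ω ≤ m + 1/((n:ℝ)+1)}) = {ω | L' ω ≤ m} := by
      ext ω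
      simp only [mem_iInter, mem_setOf_eq]
      constructor
      · intro h
        by_contra hlt
        push_neg at hlt
        obtain ⟨n, hn⟩ := exists_nat_one_div_lt (by linarith : (0:ℝ) < L' ω - m)
        have := h n; linarith
      · intro h n
        have : (0:ℝ) < 1/((n:ℝ)+1) := by positivity
        linarith
    have h3 : Tendsto (fun n : ℕ => F (m + 1/((n:ℝ)+1))) atTop (𝓝 (F m)) := by
      have := tendsto_measure_iInter_atTop (μ := P)
        (s := fun n : ℕ => {ω | L' ω ≤ m + 1/((n:ℝ)+1)})
        (fun n => (hmL measurableSet_Iic).nullMeasurableSet) hanti ⟨0, measure_ne_top P _⟩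
      rw [hint] at this
      exact htoReal _ _ this
    refine ge_of_tendsto h3 (Eventually.of_forall fun n => ?_)
    have hmlt : m < m + 1/((n:ℝ)+1) := lt_add_of_pos_right _ (by positivity)
    obtain ⟨s, hs, hslt⟩ := exists_lt_of_csInf_lt (s := {m : ℝ | u ≤ F m}) ⟨m₁, hm₁⟩ hmlt
    exact le_trans hs (hFmono hslt.le)
  · -- P {L' < m} ≤ u by left approximation
    have hmono : Monotone (fun n : ℕ => {ω | L' ω ≤ m - 1/((n:ℝ)+1)}) := by
      intro i j hij ω hω
      simp only [mem_setOf_eq] at hω ⊢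
      have : 1/((j:ℝ)+1) ≤ 1/((i:ℝ)+1) := by
        apply one_div_le_one_div_of_le (by positivity)
        have : (i:ℝ) ≤ (j:ℝ) := by exact_mod_cast hij
        linarith
      linarith
    have hun2 : (⋃ n : ℕ, {ω | L' ω ≤ m - 1/((n:ℝ)+1)}) = {ω | L' ω < m} := by
      ext ω
      simp only [mem_iUnion, mem_setOf_eq]
      constructor
      · rintro ⟨n, hn⟩
        have : (0:ℝ) < 1/((n:ℝ)+1) := by positivity
        linarith
      · intro h
        obtain ⟨n, hn⟩ := exists_nat_one_div_lt (by linarith : (0:ℝ) < m - L' ω)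
        exact ⟨n, by linarith⟩
    have h4 : Tendsto (fun n : ℕ => F (m - 1/((n:ℝ)+1))) atTop
        (𝓝 ((P {ω | L' ω < m}).toReal)) := by
      have := tendsto_measure_iUnion_atTop (μ := P)
        (s := fun n : ℕ => {ω | L' ω ≤ m - 1/((n:ℝ)+1)}) hmono
      rw [hun2] at this
      exact htoReal _ _ this
    refine le_of_tendsto h4 (Eventually.of_forall fun n => ?_)
    by_contra hlt
    push_neg at hlt
    have hmem : m - 1/((n:ℝ)+1) ∈ {m : ℝ | u ≤ F m} := hlt.le
    have := csInf_le hS'bdd hmem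
    rw [← hmdef] at this
    have hpos : (0:ℝ) < 1/((n:ℝ)+1) := by positivity
    linarith

end

end OCEAux

set_option maxHeartbeats 2000000 in
/-- dual representation of the optimized certainty equivalent:
`R_{a,b}(L) = sup { E[Z·L] : E[Z] = 1, b ≤ Z ≤ 1/a a.s. }`. -/
theorem oce_dual_representation {Ω : Type*} [MeasurableSpace Ω] (P : Measure Ω)
    [IsProbabilityMeasure P] (L : Ω → ℝ) (hL : Integrable L P)
    (a b : ℝ) (ha : 0 < a) (ha1 : a < 1) (hb : 0 ≤ b) (hb1 : b ≤ 1) :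
    OCE P L a b =
      sSup {r : ℝ | ∃ Z : Ω → ℝ, Measurable Z ∧ (∫ ω, Z ω ∂P) = 1 ∧
        (∀ᵐ ω ∂P, b ≤ Z ω ∧ Z ω ≤ 1 / a) ∧ r = ∫ ω, Z ω * L ω ∂P} := by
  classical
  rw [OCE]
  set I : Set ℝ := {r : ℝ | ∃ m : ℝ, r = m + ∫ ω, lossFn a b (L ω - m) ∂P} with hIdef
  set S : Set ℝ := {r : ℝ | ∃ Z : Ω → ℝ, Measurable Z ∧ (∫ ω, Z ω ∂P) = 1 ∧
      (∀ᵐ ω ∂P, b ≤ Z ω ∧ Z ω ≤ 1 / a) ∧ r = ∫ ω, Z ω * L ω ∂P} with hSdef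
  have h1a : (1:ℝ) < 1/a := by rw [lt_div_iff₀ ha]; linarith
  have hIne : I.Nonempty := ⟨0 + ∫ ω, lossFn a b (L ω - 0) ∂P, 0, rfl⟩
  have hELS : (∫ ω, L ω ∂P) ∈ S :=
    ⟨fun _ => 1, measurable_const, by simp, ae_of_all _ fun ω => ⟨hb1, h1a.le⟩, by simp⟩
  have key : ∀ s ∈ S, ∀ r ∈ I, s ≤ r := by
    rintro s ⟨Z, hZm, hZ1, hZb, rfl⟩ r ⟨m, rfl⟩
    exact key_le hL ha ha1 hb hb1 m Z hZm hZ1 hZb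
  obtain ⟨r₀, hr₀⟩ := hIne
  have hSbdd : BddAbove S := ⟨r₀, fun s hs => key s hs r₀ hr₀⟩
  have hIbdd : BddBelow I := ⟨∫ ω, L ω ∂P, fun r hr => key _ hELS r hr⟩
  apply le_antisymm
  · -- sInf I ≤ sSup S
    by_cases hbe : b = 1
    · -- b = 1 : limit argument
      subst hbe
      have hG : Tendsto (fun n : ℕ => ∫ ω, max (L ω - n) 0 ∂P) atTop (𝓝 0) := by
        have hdc : Tendsto (fun n : ℕ => ∫ ω, max (L ω - n) 0 ∂P) atTop
            (𝓝 (∫ _ω, (0:ℝ) ∂P)) := by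
          apply tendsto_integral_of_dominated_convergence (fun ω => |L ω|)
            (fun n => ((hL.aemeasurable.sub aemeasurable_const).max
              aemeasurable_const).aestronglyMeasurable)
            hL.abs
          · intro n
            refine ae_of_all _ fun ω => ?_
            rw [Real.norm_eq_abs, abs_of_nonneg (le_max_right _ _)]
            apply max_le _ (abs_nonneg _)
            have : (0:ℝ) ≤ n := Nat.cast_nonneg n
            calc L ω - n ≤ L ω := by linarith
              _ ≤ |L ω| := le_abs_self _
          · refine ae_of_all _ fun ω => ?_
            obtain ⟨N, hN⟩ := exists_nat_ge (L ω)
            apply tendsto_atTop_of_eventually_const (i₀ := N)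
            intro n hn
            have : (N:ℝ) ≤ n := Nat.cast_le.mpr hn
            exact max_eq_right (by show L ω - n ≤ 0; linarith)
        simpa using hdc
      have hf : ∀ n : ℕ, ((n:ℝ) + ∫ ω, lossFn a 1 (L ω - n) ∂P)
          = (∫ ω, L ω ∂P) + (1/a - 1) * ∫ ω, max (L ω - n) 0 ∂P := by
        intro n
        have i1 : Integrable (fun ω => L ω - (n:ℝ)) P := hL.sub (integrable_const _)
        have i2 : Integrable (fun ω => (1/a - 1) * max (L ω - (n:ℝ)) 0) P :=
          (i1.pos_part).const_mul _
        have e1 : (fun ω => lossFn a 1 (L ω - n))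
            = fun ω => (L ω - n) + (1/a - 1) * max (L ω - n) 0 :=
          funext fun ω => lossFn_one ha _
        rw [e1, integral_add i1 i2, integral_const_mul,
          integral_sub hL (integrable_const _), integral_const]
        simp [measure_univ]
        ring
      have hf2 : Tendsto (fun n : ℕ => (n:ℝ) + ∫ ω, lossFn a 1 (L ω - n) ∂P) atTop
          (𝓝 (∫ ω, L ω ∂P)) := by
        simp only [hf]
        have : Tendsto (fun n : ℕ => (∫ ω, L ω ∂P) + (1/a - 1) * ∫ ω, max (L ω - n) 0 ∂P)
            atTop (𝓝 ((∫ ω, L ω ∂P) + (1/a - 1) * 0)) :=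
          tendsto_const_nhds.add (tendsto_const_nhds.mul hG)
        simpa using this
      have hle : sInf I ≤ ∫ ω, L ω ∂P :=
        ge_of_tendsto hf2 (Eventually.of_forall fun n => csInf_le hIbdd ⟨n, rfl⟩)
      exact hle.trans (le_csSup hSbdd hELS)
    · -- b < 1 : exact attainment at a quantile
      have hblt : b < 1 := lt_of_le_of_ne hb1 hbe
      have hba : b < 1/a := hblt.trans h1a
      set u : ℝ := (1/a - 1)/(1/a - b) with hu
      have hu0 : 0 < u := div_pos (by linarith) (by linarith)
      have hu1 : u < 1 := (div_lt_one (by linarith)).mpr (by linarith)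
      have huid : (1/a - b) * u = 1/a - 1 := by
        rw [hu, mul_div_cancel₀ _ (by linarith : (1:ℝ)/a - b ≠ 0)]
      have hLae : AEMeasurable L P := hL.aemeasurable
      set L' : Ω → ℝ := hLae.mk L with hL'def
      have hmL : Measurable L' := hLae.measurable_mk
      have hLL' : L =ᵐ[P] L' := hLae.ae_eq_mk
      have hL' : Integrable L' P := hL.congr hLL'
      clear_value L'
      obtain ⟨m, hmu, hmu'⟩ := quantile_exists P L' hmL hu0 hu1
      set A : ℝ := (P {ω | L' ω < m}).toReal with hA
      set B : ℝ := (P {ω | L' ω = m}).toReal with hB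
      set C : ℝ := (P {ω | m < L' ω}).toReal with hC
      have hA0 : 0 ≤ A := ENNReal.toReal_nonneg
      have hB0 : 0 ≤ B := ENNReal.toReal_nonneg
      have hC0 : 0 ≤ C := ENNReal.toReal_nonneg
      clear_value A B C
      have hdisj : Disjoint {ω | L' ω < m} {ω | L' ω = m} := by
        rw [Set.disjoint_left]
        intro ω h1 h2
        simp only [mem_setOf_eq] at h1 h2
        exact absurd h2 (ne_of_lt h1)
      have hABF : A + B = (P {ω | L' ω ≤ m}).toReal := by
        have hset : {ω | L' ω ≤ m} = {ω | L' ω < m} ∪ {ω | L' ω = m} := by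
          ext ω
          simp only [mem_union, mem_setOf_eq]
          exact le_iff_lt_or_eq
        rw [hA, hB, ← ENNReal.toReal_add (measure_ne_top P _) (measure_ne_top P _), hset,
          measure_union hdisj (measurableSet_eq_fun hmL measurable_const)]
      have hsum1 : A + B + C = 1 := by
        have hdisj2 : Disjoint {ω | L' ω ≤ m} {ω | m < L' ω} := by
          rw [Set.disjoint_left]
          intro ω h1 h2
          simp only [mem_setOf_eq] at h1 h2
          exact absurd h2 (not_lt.mpr h1)
        have hset2 : {ω | L' ω ≤ m} ∪ {ω | m < L' ω} = (univ : Set Ω) := by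
          ext ω
          simp only [mem_union, mem_setOf_eq, mem_univ, iff_true]
          exact le_or_gt _ _
        have := measure_union (μ := P) hdisj2 (measurableSet_lt measurable_const hmL)
        rw [hset2, measure_univ] at this
        have h2 : (P {ω | L' ω ≤ m}).toReal + C = 1 := by
          rw [hC, ← ENNReal.toReal_add (measure_ne_top P _) (measure_ne_top P _), ← this]
          simp
        rw [hABF]
        exact h2
      have hkey1 : b*(A+B) + (1/a)*(1-(A+B)) ≤ 1 := by
        rw [hABF]
        have h := mul_le_mul_of_nonneg_left hmu (by linarith : (0:ℝ) ≤ 1/a - b)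
        rw [huid] at h
        nlinarith
      have hkey2 : 1 ≤ b*A + (1/a)*(1-A) := by
        have h := mul_le_mul_of_nonneg_left hmu' (by linarith : (0:ℝ) ≤ 1/a - b)
        rw [huid] at h
        nlinarith
      set c : ℝ := if B = 0 then b else (1 - b*A - (1/a)*C)/B with hc
      clear_value c
      have hcb : b ≤ c ∧ c ≤ 1/a := by
        rcases eq_or_ne B 0 with h|h
        · rw [hc, if_pos h]
          exact ⟨le_refl b, hba.le⟩
        · rw [hc, if_neg h]
          have hBpos : 0 < B := lt_of_le_of_ne hB0 (Ne.symm h)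
          constructor
          · rw [le_div_iff₀ hBpos]
            nlinarith
          · rw [div_le_iff₀ hBpos]
            nlinarith
      have hcsum : b*A + c*B + (1/a)*C = 1 := by
        rcases eq_or_ne B 0 with h|h
        · rw [h] at hsum1 ⊢
          nlinarith
        · rw [hc, if_neg h, div_mul_cancel₀ _ h]
          ring
      set Z : Ω → ℝ := fun ω => if L' ω < m then b else if L' ω = m then c else 1/a with hZ
      clear_value Z
      have hZm : Measurable Z := by
        rw [hZ]
        apply Measurable.ite (measurableSet_lt hmL measurable_const) measurable_const
        exact Measurable.ite (measurableSet_eq_fun hmL measurable_const)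
          measurable_const measurable_const
      have hZrange : ∀ ω, b ≤ Z ω ∧ Z ω ≤ 1/a := by
        intro ω
        rw [hZ]
        dsimp only
        split_ifs with h1 h2
        · exact ⟨le_refl b, hba.le⟩
        · exact hcb
        · exact ⟨hba.le, le_refl _⟩
      have ms1 : MeasurableSet {ω | L' ω < m} := measurableSet_lt hmL measurable_const
      have ms2 : MeasurableSet {ω | L' ω = m} := measurableSet_eq_fun hmL measurable_const
      have ms3 : MeasurableSet {ω | m < L' ω} := measurableSet_lt measurable_const hmL
      have hZeq : Z = fun ω => Set.indicator {ω | L' ω < m} (fun _ => b) ω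
          + Set.indicator {ω | L' ω = m} (fun _ => c) ω
          + Set.indicator {ω | m < L' ω} (fun _ => 1/a) ω := by
        funext ω
        rw [hZ]
        simp only [Set.indicator_apply, mem_setOf_eq]
        rcases lt_trichotomy (L' ω) m with h|h|h
        · have h2 : ¬ (L' ω = m) := ne_of_lt h
          have h3 : ¬ (m < L' ω) := not_lt.mpr h.le
          simp only [if_pos h, if_neg h2, if_neg h3]
          ring
        · have h1 : ¬ (L' ω < m) := by rw [h]; exact lt_irrefl m
          have h3 : ¬ (m < L' ω) := by rw [h]; exact lt_irrefl m
          simp only [if_neg h1, if_pos h, if_neg h3]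
          ring
        · have h1 : ¬ (L' ω < m) := not_lt.mpr h.le
          have h2 : ¬ (L' ω = m) := ne_of_gt h
          simp only [if_neg h1, if_neg h2, if_pos h]
          ring
      have i1 : Integrable ({ω | L' ω < m}.indicator fun _ => b) P :=
        (integrable_const b).indicator ms1
      have i2 : Integrable ({ω | L' ω = m}.indicator fun _ => c) P :=
        (integrable_const c).indicator ms2
      have i3 : Integrable ({ω | m < L' ω}.indicator fun _ => (1/a : ℝ)) P :=
        (integrable_const _).indicator ms3
      have hZint1 : ∫ ω, Z ω ∂P = 1 := by
        have e0 : ∫ ω, Z ω ∂P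
            = ∫ ω, (({ω | L' ω < m}.indicator fun _ => b) ω
              + ({ω | L' ω = m}.indicator fun _ => c) ω) ∂P
              + ∫ ω, ({ω | m < L' ω}.indicator fun _ => (1/a : ℝ)) ω ∂P := by
          rw [hZeq]
          exact integral_add (i1.add i2) i3
        have e12 : ∫ ω, (({ω | L' ω < m}.indicator fun _ => b) ω
            + ({ω | L' ω = m}.indicator fun _ => c) ω) ∂P
            = ∫ ω, ({ω | L' ω < m}.indicator fun _ => b) ω ∂P
              + ∫ ω, ({ω | L' ω = m}.indicator fun _ => c) ω ∂P :=
          integral_add i1 i2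
        rw [e0, e12, integral_indicator_const _ ms1, integral_indicator_const _ ms2,
          integral_indicator_const _ ms3, smul_eq_mul, smul_eq_mul, smul_eq_mul,
          measureReal_def, measureReal_def, measureReal_def, ← hA, ← hB, ← hC]
        linarith [hcsum]
      have hZLloss : ∀ ω, Z ω * (L' ω - m) = lossFn a b (L' ω - m) := by
        intro ω
        rw [hZ]
        dsimp only
        unfold lossFn
        rcases lt_trichotomy (L' ω) m with h|h|h
        · rw [if_pos h, max_eq_right (by linarith : L' ω - m ≤ 0),
            max_eq_left (by linarith : (0:ℝ) ≤ -(L' ω - m))]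
          ring
        · rw [if_neg (by simp [h]), if_pos h, h]
          simp
        · rw [if_neg (not_lt.mpr h.le), if_neg h.ne',
            max_eq_left (by linarith : (0:ℝ) ≤ L' ω - m),
            max_eq_right (by linarith : -(L' ω - m) ≤ 0)]
          field_simp
          ring
      have hZintg : Integrable Z P := by
        apply Integrable.mono' (integrable_const (1/a : ℝ)) hZm.aestronglyMeasurable
        refine ae_of_all _ fun ω => ?_
        rw [Real.norm_eq_abs, abs_of_nonneg (le_trans hb (hZrange ω).1)]
        exact (hZrange ω).2
      have hintL' : ∫ ω, Z ω * L ω ∂P = m + ∫ ω, lossFn a b (L ω - m) ∂P := by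
        have e1 : ∫ ω, Z ω * L ω ∂P = ∫ ω, Z ω * L' ω ∂P := by
          apply integral_congr_ae
          filter_upwards [hLL'] with ω h
          rw [h]
        have e2 : (fun ω => Z ω * L' ω) = fun ω => lossFn a b (L' ω - m) + m * Z ω :=
          funext fun ω => by rw [← hZLloss ω]; ring
        have e3 : ∫ ω, lossFn a b (L' ω - m) ∂P = ∫ ω, lossFn a b (L ω - m) ∂P := by
          apply integral_congr_ae
          filter_upwards [hLL'] with ω h
          rw [h]
        rw [e1, e2, integral_add (integrable_lossFn hL' ha ha1 hb hb1 m)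
          (hZintg.const_mul m), integral_const_mul, hZint1, e3]
        ring
      calc sInf I ≤ m + ∫ ω, lossFn a b (L ω - m) ∂P := csInf_le hIbdd ⟨m, rfl⟩
        _ = ∫ ω, Z ω * L ω ∂P := hintL'.symm
        _ ≤ sSup S := le_csSup hSbdd ⟨Z, hZm, hZint1, ae_of_all _ hZrange, rfl⟩
  · exact le_csInf ⟨r₀, hr₀⟩ fun r hr => csSup_le ⟨_, hELS⟩ fun s hs => key s hs r hr
end

section
/- Let L be an integrable real random variable on a probability space (Ω,𝓕,P), let 0 < a < 1 and 0 < b ≤ 1. Then the shortfall risk satisfies inf{ m ∈ ℝ : E[ℓ_{a,b}(L−m)] ≤ 0 } = sup{ R_{a/γ, bγ}(L) : a ≤ γ ≤ 1/b } = sup{ E[Z·L] : Z is a random variable with E[Z] = 1 and bγ ≤ Z ≤ γ/a almost surely for some γ ∈ [a, 1/b] }. -/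
open MeasureTheory Filter Topology Real Set
open scoped ENNReal

section AuxLemmas

variable {a b γ x y : ℝ}

lemma lossFn_of_nonneg (hx : 0 ≤ x) : lossFn a b x = x / a := by
  rw [lossFn, max_eq_left hx, max_eq_right (neg_nonpos.mpr hx)]; ring

lemma lossFn_of_nonpos (hx : x ≤ 0) : lossFn a b x = b * x := by
  rw [lossFn, max_eq_right hx, max_eq_left (neg_nonneg.mpr hx)]; ring

lemma lossFn_ge_div (ha : 0 < a) (hab : a * b ≤ 1) : x / a ≤ lossFn a b x := by
  rcases le_total 0 x with h | h
  · rw [lossFn_of_nonneg h]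
  · rw [lossFn_of_nonpos h, div_le_iff₀ ha]
    nlinarith [mul_nonneg (sub_nonneg.2 hab) (neg_nonneg.2 h)]

lemma lossFn_ge_mul (ha : 0 < a) (hab : a * b ≤ 1) : b * x ≤ lossFn a b x := by
  rcases le_total 0 x with h | h
  · rw [lossFn_of_nonneg h, le_div_iff₀ ha]
    nlinarith [mul_nonneg (sub_nonneg.2 hab) h]
  · rw [lossFn_of_nonpos h]

lemma lossFn_ge_self (ha : 0 < a) (ha1 : a ≤ 1) (hb1 : b ≤ 1) : x ≤ lossFn a b x := by
  rcases le_total 0 x with h | h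
  · rw [lossFn_of_nonneg h, le_div_iff₀ ha]; nlinarith
  · rw [lossFn_of_nonpos h]; nlinarith

lemma lossFn_sub_le (ha : 0 < a) (hab : a * b ≤ 1) (hyx : y ≤ x) :
    lossFn a b x - lossFn a b y ≤ (x - y) / a := by
  have hp : 0 ≤ max x 0 - max y 0 := sub_nonneg.2 (max_le_max hyx le_rfl)
  have hn : 0 ≤ max (-y) 0 - max (-x) 0 :=
    sub_nonneg.2 (max_le_max (neg_le_neg hyx) le_rfl)
  have hx' := max_zero_sub_max_neg_zero_eq_self x
  have hy' := max_zero_sub_max_neg_zero_eq_self y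
  have key : b * (max (-y) 0 - max (-x) 0) * a ≤ max (-y) 0 - max (-x) 0 := by
    nlinarith [mul_nonneg (sub_nonneg.2 hab) hn]
  have key2 : b * (max (-y) 0 - max (-x) 0) ≤ (max (-y) 0 - max (-x) 0) / a :=
    (le_div_iff₀ ha).mpr key
  have hrw : lossFn a b x - lossFn a b y
      = (max x 0 - max y 0) / a + b * (max (-y) 0 - max (-x) 0) := by
    simp only [lossFn]; ring
  have hrw2 : (x - y) / a = (max x 0 - max y 0) / a + (max (-y) 0 - max (-x) 0) / a := by
    rw [← add_div]
    congr 1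
    linarith
  linarith

lemma lossFn_sub_ge (ha : 0 < a) (hab : a * b ≤ 1) (hyx : y ≤ x) :
    b * (x - y) ≤ lossFn a b x - lossFn a b y := by
  have hp : 0 ≤ max x 0 - max y 0 := sub_nonneg.2 (max_le_max hyx le_rfl)
  have hx' := max_zero_sub_max_neg_zero_eq_self x
  have hy' := max_zero_sub_max_neg_zero_eq_self y
  have key : b * (max x 0 - max y 0) * a ≤ max x 0 - max y 0 := by
    nlinarith [mul_nonneg (sub_nonneg.2 hab) hp]
  have key2 : b * (max x 0 - max y 0) ≤ (max x 0 - max y 0) / a :=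
    (le_div_iff₀ ha).mpr key
  have hrw : lossFn a b x - lossFn a b y
      = (max x 0 - max y 0) / a + b * (max (-y) 0 - max (-x) 0) := by
    simp only [lossFn]; ring
  have hrw2 : b * (x - y)
      = b * (max x 0 - max y 0) + b * (max (-y) 0 - max (-x) 0) := by
    rw [← mul_add]
    congr 1
    linarith
  linarith

lemma lossFn_scale : lossFn (a / γ) (b * γ) x = γ * lossFn a b x := by
  simp only [lossFn, div_div_eq_mul_div]; ring

lemma lossFn_integrable {Ω : Type*} [MeasurableSpace Ω] {P : Measure Ω}
    [IsFiniteMeasure P] {L : Ω → ℝ}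
    (hL : Integrable L P) (a b m : ℝ) :
    Integrable (fun ω => lossFn a b (L ω - m)) P := by
  have h1 : Integrable (fun ω => L ω - m) P := hL.sub (integrable_const m)
  have h2 : Integrable (fun ω => max (L ω - m) 0) P := h1.pos_part
  have h3 : Integrable (fun ω => max (-(L ω - m)) 0) P := h1.neg.pos_part
  exact (h2.div_const a).sub (h3.const_mul b)

lemma integrable_ite_const {Ω : Type*} [MeasurableSpace Ω] {P : Measure Ω}
    [IsFiniteMeasure P] {p : Ω → Prop} [DecidablePred p]
    (hp : MeasurableSet {ω | p ω}) (c d : ℝ) :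
    Integrable (fun ω => if p ω then c else d) P := by
  have h : (fun ω => if p ω then c else d)
      = fun ω => {ω | p ω}.indicator (fun _ => c - d) ω + d := by
    funext ω; by_cases hω : p ω <;> simp [Set.indicator, hω]
  rw [h]
  exact ((integrable_const (c - d)).indicator hp).add (integrable_const d)

end AuxLemmas

/-- the shortfall risk `inf {m : E[ℓ_{a,b}(L-m)] ≤ 0}` equals
`sup_{a ≤ γ ≤ 1/b} R_{a/γ, bγ}(L)` and also equals the corresponding dual supremum. -/
theorem shortfallRisk_eq_sup_oce {Ω : Type*} [MeasurableSpace Ω] (P : Measure Ω)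
    [IsProbabilityMeasure P] (L : Ω → ℝ) (hL : Integrable L P)
    (a b : ℝ) (ha : 0 < a) (ha1 : a < 1) (hb : 0 < b) (hb1 : b ≤ 1) :
    sInf {m : ℝ | ∫ ω, lossFn a b (L ω - m) ∂P ≤ 0} =
      sSup {r : ℝ | ∃ γ : ℝ, a ≤ γ ∧ γ ≤ 1 / b ∧ r = OCE P L (a / γ) (b * γ)} ∧
    sInf {m : ℝ | ∫ ω, lossFn a b (L ω - m) ∂P ≤ 0} =
      sSup {r : ℝ | ∃ Z : Ω → ℝ, ∃ γ : ℝ, a ≤ γ ∧ γ ≤ 1 / b ∧ Measurable Z ∧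
        (∫ ω, Z ω ∂P) = 1 ∧ (∀ᵐ ω ∂P, b * γ ≤ Z ω ∧ Z ω ≤ γ / a) ∧
        r = ∫ ω, Z ω * L ω ∂P} := by
  classical
  have hab1 : a * b ≤ 1 := by nlinarith
  set F : ℝ → ℝ := fun m => ∫ ω, lossFn a b (L ω - m) ∂P with hFdef
  have hFapp : ∀ m, F m = ∫ ω, lossFn a b (L ω - m) ∂P := fun m => rfl
  have fint : ∀ m : ℝ, Integrable (fun ω => lossFn a b (L ω - m)) P :=
    fun m => lossFn_integrable hL a b m
  -- expected value of L - m
  have hLm : ∀ m : ℝ, ∫ ω, (L ω - m) ∂P = (∫ ω, L ω ∂P) - m := by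
    intro m
    rw [integral_sub hL (integrable_const m), integral_const]
    simp
  -- Lipschitz-type bounds
  have hmono1 : ∀ m m' : ℝ, m ≤ m' → F m ≤ F m' + (m' - m) / a := by
    intro m m' h
    have hpt : ∀ ω, lossFn a b (L ω - m) ≤ lossFn a b (L ω - m') + (m' - m) / a := by
      intro ω
      have := lossFn_sub_le (x := L ω - m) (y := L ω - m') ha hab1 (by linarith)
      have heq : (L ω - m) - (L ω - m') = m' - m := by ring
      rw [heq] at this
      linarith
    have hadd : Integrable (fun ω => lossFn a b (L ω - m') + (m' - m) / a) P :=
      (fint m').add (integrable_const ((m' - m) / a))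
    have h1 := integral_mono (fint m) hadd hpt
    rw [integral_add (fint m') (integrable_const ((m' - m) / a)), integral_const] at h1
    simpa using h1
  have hmono2 : ∀ m m' : ℝ, m ≤ m' → F m' + b * (m' - m) ≤ F m := by
    intro m m' h
    have hpt : ∀ ω, lossFn a b (L ω - m') + b * (m' - m) ≤ lossFn a b (L ω - m) := by
      intro ω
      have := lossFn_sub_ge (x := L ω - m) (y := L ω - m') ha hab1 (by linarith)
      have heq : (L ω - m) - (L ω - m') = m' - m := by ring
      rw [heq] at this
      linarith
    have hadd : Integrable (fun ω => lossFn a b (L ω - m') + b * (m' - m)) P :=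
      (fint m').add (integrable_const (b * (m' - m)))
    have h1 := integral_mono hadd (fint m) hpt
    rw [integral_add (fint m') (integrable_const (b * (m' - m))), integral_const] at h1
    simpa using h1
  have hEL : ∀ m : ℝ, (∫ ω, L ω ∂P) - m ≤ F m := by
    intro m
    have hint : Integrable (fun ω => L ω - m) P := hL.sub (integrable_const m)
    have h1 := integral_mono hint (fint m) (fun ω => lossFn_ge_self ha ha1.le hb1)
    rw [hLm m] at h1
    exact h1
  -- the shortfall set
  set S : Set ℝ := {m : ℝ | ∫ ω, lossFn a b (L ω - m) ∂P ≤ 0} with hSdef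
  have hSmem : ∀ m : ℝ, m ∈ S ↔ F m ≤ 0 := fun m => Iff.rfl
  have hSne : S.Nonempty := by
    refine ⟨max 0 (F 0 / b), ?_⟩
    rw [hSmem]
    have h1 := hmono2 0 (max 0 (F 0 / b)) (le_max_left _ _)
    have h2 : F 0 / b ≤ max 0 (F 0 / b) := le_max_right _ _
    have h3 : b * (F 0 / b) ≤ b * max 0 (F 0 / b) :=
      mul_le_mul_of_nonneg_left h2 hb.le
    rw [mul_div_cancel₀ _ hb.ne'] at h3
    linarith
  have hSbd : BddBelow S := by
    refine ⟨∫ ω, L ω ∂P, fun m hm => ?_⟩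
    have h1 : F m ≤ 0 := (hSmem m).1 hm
    have := hEL m
    linarith
  set s : ℝ := sInf S with hsdef
  have hs_le : ∀ m ∈ S, s ≤ m := fun m hm => csInf_le hSbd hm
  have hFs_le : F s ≤ 0 := by
    by_contra hpos
    push_neg at hpos
    have hlb : ∀ m ∈ S, s + a * F s ≤ m := by
      intro m hm
      have h1 : s ≤ m := hs_le m hm
      have h2 := hmono1 s m h1
      have h3 : F m ≤ 0 := (hSmem m).1 hm
      have h4 : F s ≤ (m - s) / a := by linarith
      have h5 : a * F s ≤ m - s := by
        have h6 := (le_div_iff₀ ha).mp h4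
        linarith [mul_comm (F s) a]
      linarith
    have := le_csInf hSne hlb
    nlinarith
  have hFs_ge : 0 ≤ F s := by
    by_contra hneg
    push_neg at hneg
    have hε : 0 < -(a * F s) := by nlinarith
    have hnotin : s - (-(a * F s)) ∉ S := by
      intro hmem
      have := hs_le _ hmem
      linarith
    have h4 : 0 < F (s - (-(a * F s))) := by
      by_contra h
      push_neg at h
      exact hnotin ((hSmem _).2 h)
    have h5 := hmono1 (s - (-(a * F s))) s (by linarith)
    have h6 : s - (s - (-(a * F s))) = -(a * F s) := by ring
    rw [h6] at h5
    have h7 : -(a * F s) / a = -F s := by field_simp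
    rw [h7] at h5
    linarith
  have hFs : F s = 0 := le_antisymm hFs_le hFs_ge
  -- measurable version of L
  set L' : Ω → ℝ := hL.aestronglyMeasurable.mk L with hL'def
  have hLm' : Measurable L' := hL.aestronglyMeasurable.stronglyMeasurable_mk.measurable
  have hLae : L =ᵐ[P] L' := hL.aestronglyMeasurable.ae_eq_mk
  have hL' : Integrable L' P := hL.congr hLae
  have hFF' : ∀ m : ℝ, F m = ∫ ω, lossFn a b (L' ω - m) ∂P := by
    intro m
    exact integral_congr_ae (hLae.mono fun ω h => by dsimp only; rw [h])
  have fint' : ∀ m : ℝ, Integrable (fun ω => lossFn a b (L' ω - m)) P :=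
    fun m => lossFn_integrable hL' a b m
  -- the subgradient weight
  set g : Ω → ℝ := fun ω => if s < L' ω then -a⁻¹ else -b with hgdef
  have hAset : MeasurableSet {ω | s < L' ω} := measurableSet_lt measurable_const hLm'
  have hgint : Integrable g P := integrable_ite_const hAset (-a⁻¹) (-b)
  set c : ℝ := ∫ ω, g ω ∂P with hcdef
  have hbinva : b ≤ a⁻¹ := by
    have h1 : b * a ≤ 1 := by nlinarith
    have h2 : b ≤ 1 / a := (le_div_iff₀ ha).mpr h1
    rw [one_div] at h2
    exact h2
  have hgub : ∀ ω, g ω ≤ -b := by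
    intro ω
    show (if s < L' ω then -a⁻¹ else -b) ≤ -b
    split_ifs with h
    · linarith
    · exact le_rfl
  have hglb : ∀ ω, -a⁻¹ ≤ g ω := by
    intro ω
    show -a⁻¹ ≤ (if s < L' ω then -a⁻¹ else -b)
    split_ifs with h
    · exact le_rfl
    · linarith
  have hcub : c ≤ -b := by
    have h1 := integral_mono hgint (integrable_const (-b)) hgub
    rw [integral_const] at h1
    simpa using h1
  have hclb : -a⁻¹ ≤ c := by
    have h1 := integral_mono (integrable_const (-a⁻¹)) hgint hglb
    rw [integral_const] at h1
    simpa using h1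
  have hcneg : c < 0 := lt_of_le_of_lt hcub (by linarith)
  set γ₀ : ℝ := -c⁻¹ with hγ₀def
  have hγ₀pos : 0 < γ₀ := by
    have h1 : c⁻¹ < 0 := inv_lt_zero.mpr hcneg
    show (0:ℝ) < -c⁻¹
    linarith
  have hγ₀c : γ₀ * c = -1 := by
    show -c⁻¹ * c = -1
    rw [neg_mul, inv_mul_cancel₀ hcneg.ne]
  have hocdiv : (1:ℝ) / (-c) = γ₀ := by
    rw [one_div, inv_neg]
  have hγ₀a : a ≤ γ₀ := by
    have h0 : -c ≤ a⁻¹ := by linarith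
    have h1 : a * -c ≤ a * a⁻¹ := mul_le_mul_of_nonneg_left h0 ha.le
    rw [mul_inv_cancel₀ ha.ne'] at h1
    have h2 : a ≤ 1 / -c := (le_div_iff₀ (by linarith : (0:ℝ) < -c)).mpr (by linarith)
    rw [hocdiv] at h2
    exact h2
  have hγ₀b : γ₀ ≤ 1 / b := by
    have h0 : b ≤ -c := by linarith
    have h1 := one_div_le_one_div_of_le hb h0
    rw [hocdiv] at h1
    exact h1
  -- subgradient inequality
  have hsub : ∀ m : ℝ, c * (m - s) ≤ F m := by
    intro m
    have hpt : ∀ ω, lossFn a b (L' ω - s) + g ω * (m - s) ≤ lossFn a b (L' ω - m) := by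
      intro ω
      show lossFn a b (L' ω - s) + (if s < L' ω then -a⁻¹ else -b) * (m - s) ≤ _
      split_ifs with h
      · rw [lossFn_of_nonneg (by linarith : (0:ℝ) ≤ L' ω - s)]
        have h2 : (L' ω - m) / a ≤ lossFn a b (L' ω - m) := lossFn_ge_div ha hab1
        have h3 : (L' ω - s) / a + -a⁻¹ * (m - s) = (L' ω - m) / a := by
          field_simp; ring
        linarith
      · push_neg at h
        rw [lossFn_of_nonpos (by linarith : L' ω - s ≤ 0)]
        have h2 : b * (L' ω - m) ≤ lossFn a b (L' ω - m) := lossFn_ge_mul ha hab1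
        have h3 : b * (L' ω - s) + -b * (m - s) = b * (L' ω - m) := by ring
        linarith
    have hgm : Integrable (fun ω => g ω * (m - s)) P := hgint.mul_const _
    have hsum : Integrable (fun ω => lossFn a b (L' ω - s) + g ω * (m - s)) P :=
      (fint' s).add hgm
    have h1 := integral_mono hsum (fint' m) hpt
    rw [integral_add (fint' s) hgm, integral_mul_const, ← hcdef,
      ← hFF' s, ← hFF' m, hFs] at h1
    linarith
  -- scaling identity for OCE
  have hscale : ∀ γ m : ℝ, (∫ ω, lossFn (a / γ) (b * γ) (L ω - m) ∂P) = γ * F m := by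
    intro γ m
    rw [hFapp, ← integral_const_mul]
    exact integral_congr_ae (Filter.Eventually.of_forall fun ω => lossFn_scale)
  have hOCEeq : ∀ γ : ℝ, OCE P L (a / γ) (b * γ)
      = sInf {r : ℝ | ∃ m : ℝ, r = m + γ * F m} := by
    intro γ
    unfold OCE
    congr 1
    ext r
    simp only [mem_setOf_eq]
    exact exists_congr fun m => by rw [hscale γ m]
  have hOCE_lb : ∀ γ : ℝ, a ≤ γ → γ ≤ 1 / b → ∀ m : ℝ,
      (∫ ω, L ω ∂P) ≤ m + γ * F m := by
    intro γ hγa hγb m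
    have hγpos : 0 < γ := lt_of_lt_of_le ha hγa
    have ha' : 0 < a / γ := div_pos ha hγpos
    have ha'1 : a / γ ≤ 1 := by rw [div_le_one hγpos]; exact hγa
    have hb'1 : b * γ ≤ 1 := by
      have h0 := (le_div_iff₀ hb).mp hγb
      linarith [mul_comm b γ]
    have hint : Integrable (fun ω => L ω - m) P := hL.sub (integrable_const m)
    have h1 := integral_mono hint (lossFn_integrable hL (a / γ) (b * γ) m)
      (fun ω => lossFn_ge_self ha' ha'1 hb'1)
    rw [hLm m, hscale γ m] at h1
    linarith
  have hOCE_le : ∀ γ : ℝ, a ≤ γ → γ ≤ 1 / b → OCE P L (a / γ) (b * γ) ≤ s := by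
    intro γ hγa hγb
    rw [hOCEeq γ]
    exact csInf_le ⟨∫ ω, L ω ∂P, fun r ⟨m, hm⟩ => hm ▸ hOCE_lb γ hγa hγb m⟩
      ⟨s, by rw [hFs]; ring⟩
  have hOCE₀ : OCE P L (a / γ₀) (b * γ₀) = s := by
    refine le_antisymm (hOCE_le γ₀ hγ₀a hγ₀b) ?_
    rw [hOCEeq γ₀]
    refine le_csInf ⟨s + γ₀ * F s, ⟨s, rfl⟩⟩ ?_
    rintro r ⟨m, rfl⟩
    have h1 := hsub m
    have h2 : γ₀ * (c * (m - s)) = -(m - s) := by rw [← mul_assoc, hγ₀c]; ring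
    have h3 := mul_le_mul_of_nonneg_left h1 hγ₀pos.le
    linarith
  -- upper bound for first sup
  have hTub : ∀ r ∈ {r : ℝ | ∃ γ : ℝ, a ≤ γ ∧ γ ≤ 1 / b ∧ r = OCE P L (a / γ) (b * γ)},
      r ≤ s := by
    rintro r ⟨γ, hγa, hγb, rfl⟩
    exact hOCE_le γ hγa hγb
  have hsT : s ∈ {r : ℝ | ∃ γ : ℝ, a ≤ γ ∧ γ ≤ 1 / b ∧ r = OCE P L (a / γ) (b * γ)} :=
    ⟨γ₀, hγ₀a, hγ₀b, hOCE₀.symm⟩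
  -- upper bound for the dual sup
  have hUub : ∀ r ∈ {r : ℝ | ∃ Z : Ω → ℝ, ∃ γ : ℝ, a ≤ γ ∧ γ ≤ 1 / b ∧ Measurable Z ∧
      (∫ ω, Z ω ∂P) = 1 ∧ (∀ᵐ ω ∂P, b * γ ≤ Z ω ∧ Z ω ≤ γ / a) ∧
      r = ∫ ω, Z ω * L ω ∂P}, r ≤ s := by
    rintro r ⟨Z, γ, hγa, hγb, hZm, hZ1, hZbd, rfl⟩
    have hγpos : 0 < γ := lt_of_lt_of_le ha hγa
    have hbound : ∀ᵐ ω ∂P, ‖Z ω‖ ≤ γ / a := by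
      filter_upwards [hZbd] with ω hω
      rw [Real.norm_eq_abs, abs_le]
      refine ⟨?_, hω.2⟩
      have h1 : 0 ≤ b * γ := mul_nonneg hb.le hγpos.le
      have h2 : 0 ≤ γ / a := div_nonneg hγpos.le ha.le
      linarith [hω.1]
    have hZae : AEStronglyMeasurable Z P := hZm.aestronglyMeasurable
    have hZsint : Integrable (fun ω => Z ω * (L ω - s)) P :=
      (hL.sub (integrable_const s)).bdd_mul hZae hbound
    have hZint : Integrable Z P := by
      have h0 := (integrable_const (1:ℝ)).bdd_mul hZae hbound
      exact h0.congr (Filter.Eventually.of_forall fun ω => by simp)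
    have hptZ : ∀ᵐ ω ∂P, Z ω * (L ω - s) ≤ γ * lossFn a b (L ω - s) := by
      filter_upwards [hZbd] with ω hω
      rcases le_total 0 (L ω - s) with h | h
      · rw [lossFn_of_nonneg h]
        calc Z ω * (L ω - s) ≤ (γ / a) * (L ω - s) := mul_le_mul_of_nonneg_right hω.2 h
          _ = γ * ((L ω - s) / a) := by ring
      · rw [lossFn_of_nonpos h]
        calc Z ω * (L ω - s) ≤ (b * γ) * (L ω - s) := mul_le_mul_of_nonpos_right hω.1 h
          _ = γ * (b * (L ω - s)) := by ring
    have h1 := integral_mono_ae hZsint ((fint s).const_mul γ) hptZ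
    rw [integral_const_mul, ← hFapp s, hFs, mul_zero] at h1
    have h2 : (fun ω => Z ω * L ω) = fun ω => Z ω * (L ω - s) + s * Z ω :=
      funext fun ω => by ring
    show (∫ ω, Z ω * L ω ∂P) ≤ s
    rw [h2, integral_add hZsint (hZint.const_mul s), integral_const_mul, hZ1, mul_one]
    linarith
  -- the optimal dual variable
  set Z₀ : Ω → ℝ := fun ω => if s < L' ω then γ₀ / a else b * γ₀ with hZ₀def
  have hZ₀m : Measurable Z₀ := Measurable.ite hAset measurable_const measurable_const
  have hZ₀g : ∀ ω, Z₀ ω = -γ₀ * g ω := by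
    intro ω
    show (if s < L' ω then γ₀ / a else b * γ₀) = -γ₀ * (if s < L' ω then -a⁻¹ else -b)
    split_ifs with h
    · rw [div_eq_mul_inv]; ring
    · ring
  have hZ₀int : Integrable Z₀ P := integrable_ite_const hAset _ _
  have hZ₀1 : ∫ ω, Z₀ ω ∂P = 1 := by
    have h0 : ∫ ω, Z₀ ω ∂P = ∫ ω, -γ₀ * g ω ∂P :=
      integral_congr_ae (Filter.Eventually.of_forall fun ω => hZ₀g ω)
    rw [h0, integral_const_mul, ← hcdef]
    have := hγ₀c
    linarith
  have hZ₀bd : ∀ ω, b * γ₀ ≤ Z₀ ω ∧ Z₀ ω ≤ γ₀ / a := by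
    intro ω
    have hkey : b * γ₀ ≤ γ₀ / a := by
      rw [le_div_iff₀ ha]
      nlinarith [hγ₀pos]
    show b * γ₀ ≤ (if s < L' ω then γ₀ / a else b * γ₀) ∧
      (if s < L' ω then γ₀ / a else b * γ₀) ≤ γ₀ / a
    split_ifs with h
    · exact ⟨hkey, le_rfl⟩
    · exact ⟨le_rfl, hkey⟩
  have hZ₀L : ∫ ω, Z₀ ω * L ω ∂P = s := by
    have hb1' : ∀ᵐ ω ∂P, ‖Z₀ ω‖ ≤ γ₀ / a := Filter.Eventually.of_forall fun ω => by
      rw [Real.norm_eq_abs, abs_le]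
      refine ⟨?_, (hZ₀bd ω).2⟩
      have h1 : 0 ≤ b * γ₀ := mul_nonneg hb.le hγ₀pos.le
      have h2 : 0 ≤ γ₀ / a := div_nonneg hγ₀pos.le ha.le
      linarith [(hZ₀bd ω).1]
    have hZ₀s : Integrable (fun ω => Z₀ ω * (L ω - s)) P :=
      (hL.sub (integrable_const s)).bdd_mul hZ₀m.aestronglyMeasurable hb1'
    have h2 : (fun ω => Z₀ ω * L ω) = fun ω => Z₀ ω * (L ω - s) + s * Z₀ ω :=
      funext fun ω => by ring
    rw [h2, integral_add hZ₀s (hZ₀int.const_mul s), integral_const_mul, hZ₀1, mul_one]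
    have h3 : ∫ ω, Z₀ ω * (L ω - s) ∂P = ∫ ω, γ₀ * lossFn a b (L' ω - s) ∂P := by
      apply integral_congr_ae
      filter_upwards [hLae] with ω hω
      rw [hω]
      show (if s < L' ω then γ₀ / a else b * γ₀) * (L' ω - s) = γ₀ * lossFn a b (L' ω - s)
      split_ifs with h
      · rw [lossFn_of_nonneg (by linarith : (0:ℝ) ≤ L' ω - s)]; ring
      · push_neg at h
        rw [lossFn_of_nonpos (by linarith : L' ω - s ≤ 0)]; ring
    rw [h3, integral_const_mul, ← hFF' s, hFs, mul_zero, zero_add]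
  have hsU : s ∈ {r : ℝ | ∃ Z : Ω → ℝ, ∃ γ : ℝ, a ≤ γ ∧ γ ≤ 1 / b ∧ Measurable Z ∧
      (∫ ω, Z ω ∂P) = 1 ∧ (∀ᵐ ω ∂P, b * γ ≤ Z ω ∧ Z ω ≤ γ / a) ∧
      r = ∫ ω, Z ω * L ω ∂P} :=
    ⟨Z₀, γ₀, hγ₀a, hγ₀b, hZ₀m, hZ₀1,
      Filter.Eventually.of_forall hZ₀bd, hZ₀L.symm⟩
  exact ⟨le_antisymm (le_csSup ⟨s, hTub⟩ hsT) (csSup_le ⟨s, hsT⟩ hTub),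
    le_antisymm (le_csSup ⟨s, hUub⟩ hsU) (csSup_le ⟨s, hsU⟩ hUub)⟩
end

section
/- Let L be an integrable real random variable on a probability space (Ω,𝓕,P) and let 1/2 < α < 1. Then the α-expectile admits the representation e_α(L) = sup{ (1−γ)·ES_{((1+γ)α−1)/((2α−1)γ)}(L) + γ·E[L] : (1−α)/α < γ < 1 }, and if L is not almost surely constant the supremum is attained at some γ in the open interval ((1−α)/α, 1). -/
open MeasureTheory Filter Topology Real Set
open scoped ENNReal

namespace ExpAux
variable {Ω : Type*} [MeasurableSpace Ω] {P : Measure Ω} [IsProbabilityMeasure P]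
  {L : Ω → ℝ}

lemma Fmono (P : Measure Ω) [IsProbabilityMeasure P] (L : Ω → ℝ) :
    Monotone (fun m => (P {ω | L ω ≤ m}).toReal) := fun m m' h => by
  apply ENNReal.toReal_mono (measure_ne_top _ _)
  exact measure_mono fun ω hw => le_trans hw h

lemma Fle1 (P : Measure Ω) [IsProbabilityMeasure P] (L : Ω → ℝ) (m : ℝ) :
    (P {ω | L ω ≤ m}).toReal ≤ 1 := by
  rw [show (1:ℝ) = (1 : ℝ≥0∞).toReal by simp]
  exact ENNReal.toReal_mono ENNReal.one_ne_top prob_le_one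

lemma Fnonneg (P : Measure Ω) (L : Ω → ℝ) (m : ℝ) :
    0 ≤ (P {ω | L ω ≤ m}).toReal := ENNReal.toReal_nonneg

/-- right continuity along `c + 1/(n+1)` -/
lemma Frc (hm : Measurable L) (c : ℝ) :
    Tendsto (fun n : ℕ => (P {ω | L ω ≤ c + 1/(n+1)}).toReal) atTop
      (𝓝 ((P {ω | L ω ≤ c}).toReal)) := by
  have hset : ⋂ n : ℕ, {ω | L ω ≤ c + 1/(n+1)} = {ω | L ω ≤ c} := by
    ext ω
    simp only [mem_iInter, mem_setOf_eq]
    constructor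
    · intro h
      have : Tendsto (fun n : ℕ => c + 1/((n:ℝ)+1)) atTop (𝓝 (c + 0)) :=
        tendsto_const_nhds.add (tendsto_one_div_add_atTop_nhds_zero_nat)
      simp only [add_zero] at this
      exact ge_of_tendsto' this (fun n => h n)
    · intro h n
      have : (0:ℝ) < 1/((n:ℝ)+1) := by positivity
      linarith
  have key : Tendsto (fun n : ℕ => P {ω | L ω ≤ c + 1/(n+1)}) atTop
      (𝓝 (P {ω | L ω ≤ c})) := by
    rw [← hset]
    apply tendsto_measure_iInter_atTop
    · exact fun n => (hm measurableSet_Iic).nullMeasurableSet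
    · intro i j hij ω hw
      simp only [mem_setOf_eq] at *
      have : (1:ℝ)/((j:ℝ)+1) ≤ 1/((i:ℝ)+1) := by
        apply one_div_le_one_div_of_le (by positivity)
        have : (i:ℝ) ≤ j := Nat.cast_le.2 hij
        linarith
      linarith
    · exact ⟨0, measure_ne_top _ _⟩
  exact (ENNReal.tendsto_toReal (measure_ne_top _ _)).comp key


/-- for `u < 1` the quantile set is nonempty -/
lemma Sne (hm : Measurable L) {u : ℝ} (hu : u < 1) :
    Set.Nonempty {m : ℝ | u ≤ (P {ω | L ω ≤ m}).toReal} := by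
  have hset : ⋃ n : ℕ, {ω | L ω ≤ (n:ℝ)} = univ := by
    ext ω; simp only [mem_iUnion, mem_setOf_eq, mem_univ, iff_true]
    obtain ⟨n, hn⟩ := exists_nat_ge (L ω); exact ⟨n, hn⟩
  have key : Tendsto (fun n : ℕ => P {ω | L ω ≤ (n:ℝ)}) atTop (𝓝 (P univ)) := by
    rw [← hset]
    apply tendsto_measure_iUnion_atTop
    intro i j hij ω hw
    simp only [mem_setOf_eq] at *
    exact le_trans hw (Nat.cast_le.2 hij)
  have key2 : Tendsto (fun n : ℕ => (P {ω | L ω ≤ (n:ℝ)}).toReal) atTop (𝓝 1) := by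
    have := (ENNReal.tendsto_toReal (measure_ne_top P univ)).comp key
    simpa [measure_univ, Function.comp_def] using this
  obtain ⟨n, hn⟩ := (key2.eventually (eventually_ge_nhds hu)).exists
  exact ⟨n, hn⟩

/-- for `0 < u` the quantile set is bounded below, in fact within `Ici` of some point -/
lemma Sbdd (hm : Measurable L) {u : ℝ} (hu : 0 < u) :
    ∃ M : ℝ, {m : ℝ | u ≤ (P {ω | L ω ≤ m}).toReal} ⊆ Ici M := by
  have hset : ⋂ n : ℕ, {ω | L ω ≤ -(n:ℝ)} = ∅ := by
    ext ω; simp only [mem_iInter, mem_setOf_eq, mem_empty_iff_false, iff_false, not_forall]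
    obtain ⟨n, hn⟩ := exists_nat_gt (-L ω)
    exact ⟨n, by push_neg; linarith⟩
  have key : Tendsto (fun n : ℕ => P {ω | L ω ≤ -(n:ℝ)}) atTop (𝓝 (P (∅ : Set Ω))) := by
    rw [← hset]
    apply tendsto_measure_iInter_atTop
    · exact fun n => (hm measurableSet_Iic).nullMeasurableSet
    · intro i j hij ω hw
      simp only [mem_setOf_eq] at *
      have : (i:ℝ) ≤ j := Nat.cast_le.2 hij
      linarith
    · exact ⟨0, measure_ne_top _ _⟩
  have key2 : Tendsto (fun n : ℕ => (P {ω | L ω ≤ -(n:ℝ)}).toReal) atTop (𝓝 0) := by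
    have := (ENNReal.tendsto_toReal (measure_ne_top P ∅)).comp key
    simpa [Function.comp_def] using this
  obtain ⟨n, hn⟩ := (key2.eventually (eventually_lt_nhds hu)).exists
  refine ⟨-(n:ℝ), fun m hmem => ?_⟩
  simp only [mem_setOf_eq] at hmem
  by_contra hcon
  simp only [mem_Ici, not_le] at hcon
  have := Fmono P L (le_of_lt hcon)
  simp only at this
  have : u ≤ (P {ω | L ω ≤ -(n:ℝ)}).toReal := le_trans hmem this
  linarith

lemma quantile_le_iff (hm : Measurable L) {u : ℝ} (hu0 : 0 < u) (hu1 : u < 1) (c : ℝ) :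
    leftQuantile P L u ≤ c ↔ u ≤ (P {ω | L ω ≤ c}).toReal := by
  obtain ⟨M, hM⟩ := Sbdd (P := P) hm hu0
  have hbdd : BddBelow {m : ℝ | u ≤ (P {ω | L ω ≤ m}).toReal} := ⟨M, hM⟩
  have hne := Sne (P := P) hm hu1
  constructor
  · intro h
    have step : ∀ n : ℕ, u ≤ (P {ω | L ω ≤ c + 1/(n+1)}).toReal := by
      intro n
      have hlt : leftQuantile P L u < c + 1/(n+1) := lt_of_le_of_lt h (by
        have : (0:ℝ) < 1/((n:ℝ)+1) := by positivity
        linarith)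
      obtain ⟨m, hmem, hmlt⟩ := (csInf_lt_iff hbdd hne).1 hlt
      exact le_trans hmem (Fmono P L (le_of_lt hmlt))
    exact ge_of_tendsto' (Frc (P := P) hm c) step
  · intro h
    exact csInf_le hbdd h

lemma le_quantile (hm : Measurable L) {u : ℝ} (hu1 : u < 1) {c : ℝ}
    (h : (P {ω | L ω < c}).toReal < u) : c ≤ leftQuantile P L u := by
  apply le_csInf (Sne (P := P) hm hu1)
  intro m hmem
  simp only [mem_setOf_eq] at hmem
  by_contra hcon
  push_neg at hcon
  have hsub : {ω | L ω ≤ m} ⊆ {ω | L ω < c} := fun ω hw => lt_of_le_of_lt hw hcon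
  have : (P {ω | L ω ≤ m}).toReal ≤ (P {ω | L ω < c}).toReal :=
    ENNReal.toReal_mono (measure_ne_top _ _) (measure_mono hsub)
  linarith

lemma quantile_mono (hm : Measurable L) {u v : ℝ} (hu0 : 0 < u) (huv : u ≤ v) (hv1 : v < 1) :
    leftQuantile P L u ≤ leftQuantile P L v := by
  obtain ⟨M, hM⟩ := Sbdd (P := P) hm hu0
  apply csInf_le_csInf ⟨M, hM⟩ (Sne (P := P) hm hv1)
  intro m hmem
  exact le_trans huv hmem


lemma quantile_aemeasurable (hm : Measurable L) :
    AEMeasurable (leftQuantile P L) (volume.restrict (Ioo (0:ℝ) 1)) := by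
  set g : ℝ → ℝ := (Ioo (0:ℝ) 1).indicator (leftQuantile P L) with hg
  have hgmeas : Measurable g := by
    apply measurable_of_Iic
    intro t
    by_cases ht : 0 ≤ t
    · have hset : g ⁻¹' Iic t =
          (Ioo (0:ℝ) 1 ∩ Iic ((P {ω | L ω ≤ t}).toReal)) ∪ (Ioo (0:ℝ) 1)ᶜ := by
        ext u
        by_cases hu : u ∈ Ioo (0:ℝ) 1
        · simp only [mem_preimage, mem_Iic, hg, indicator_of_mem hu, mem_union, mem_inter_iff,
            hu, true_and, mem_compl_iff, not_true_eq_false, or_false,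
            quantile_le_iff hm hu.1 hu.2 t]
        · simp only [mem_preimage, mem_Iic, hg, indicator_of_notMem hu, mem_union,
            mem_inter_iff, hu, false_and, mem_compl_iff, not_false_eq_true, or_true, ht]
      rw [hset]
      exact (measurableSet_Ioo.inter measurableSet_Iic).union measurableSet_Ioo.compl
    · have hset : g ⁻¹' Iic t = Ioo (0:ℝ) 1 ∩ Iic ((P {ω | L ω ≤ t}).toReal) := by
        ext u
        by_cases hu : u ∈ Ioo (0:ℝ) 1
        · simp only [mem_preimage, mem_Iic, hg, indicator_of_mem hu, mem_inter_iff, hu, true_and,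
            quantile_le_iff hm hu.1 hu.2 t]
        · simp only [mem_preimage, mem_Iic, hg, indicator_of_notMem hu, mem_inter_iff, hu,
            false_and, iff_false, not_le]
          push_neg at ht; exact ht
      rw [hset]
      exact measurableSet_Ioo.inter measurableSet_Iic
  apply hgmeas.aemeasurable.congr
  filter_upwards [ae_restrict_mem measurableSet_Ioo] with u hu
  exact indicator_of_mem hu _

lemma key_identity (hm : Measurable L) (hL : Integrable L P) (c : ℝ) :
    IntegrableOn (fun u => max (leftQuantile P L u - c) 0) (Ioo (0:ℝ) 1) volume ∧
    ∫ u in Ioo (0:ℝ) 1, max (leftQuantile P L u - c) 0 = ∫ ω, max (L ω - c) 0 ∂P := by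
  have hLi : Integrable (fun ω => max (L ω - c) 0) P := (hL.sub (integrable_const c)).pos_part
  have qmeas : AEMeasurable (fun u => max (leftQuantile P L u - c) 0)
      (volume.restrict (Ioo (0:ℝ) 1)) :=
    ((quantile_aemeasurable hm).sub aemeasurable_const).max aemeasurable_const
  have hnn : ∀ u : ℝ, (0:ℝ) ≤ max (leftQuantile P L u - c) 0 := fun u => le_max_right _ _
  have hnn' : ∀ ω : Ω, (0:ℝ) ≤ max (L ω - c) 0 := fun ω => le_max_right _ _
  have hmeasEq : ∀ t ∈ Ioi (0:ℝ),
      (volume.restrict (Ioo (0:ℝ) 1)) {u | t < max (leftQuantile P L u - c) 0}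
        = P {ω | t < max (L ω - c) 0} := by
    intro t ht
    simp only [mem_Ioi] at ht
    have h1 : {u : ℝ | t < max (leftQuantile P L u - c) 0} ∩ Ioo (0:ℝ) 1
        = Ioo ((P {ω | L ω ≤ c + t}).toReal) 1 := by
      ext u
      simp only [mem_inter_iff, mem_setOf_eq, mem_Ioo, lt_max_iff]
      constructor
      · rintro ⟨h, hu0, hu1⟩
        rcases h with h | h
        · refine ⟨?_, hu1⟩
          by_contra hcon
          push_neg at hcon
          have := (quantile_le_iff hm hu0 hu1 (c + t)).2 (le_trans hcon (le_refl _))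
          linarith
        · linarith
      · rintro ⟨h, hu1⟩
        have hu0 : 0 < u := lt_of_le_of_lt (Fnonneg P L (c + t)) h
        refine ⟨?_, hu0, hu1⟩
        left
        by_contra hcon
        push_neg at hcon
        have := (quantile_le_iff hm hu0 hu1 (c + t)).1 (by linarith)
        linarith
    have h2 : {ω | t < max (L ω - c) 0} = {ω | L ω ≤ c + t}ᶜ := by
      ext ω
      simp only [mem_setOf_eq, mem_compl_iff, lt_max_iff, not_le]
      constructor
      · rintro (h | h)
        · linarith
        · linarith
      · intro h; left; linarith
    rw [Measure.restrict_apply' measurableSet_Ioo, h1, Real.volume_Ioo, h2,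
      prob_compl_eq_one_sub (s := {ω | L ω ≤ c + t}) (hm measurableSet_Iic)]
    rw [ENNReal.ofReal_sub _ ENNReal.toReal_nonneg, ENNReal.ofReal_one,
      ENNReal.ofReal_toReal (measure_ne_top _ _)]
  have hlint : ∫⁻ u in Ioo (0:ℝ) 1, ENNReal.ofReal (max (leftQuantile P L u - c) 0)
      = ∫⁻ ω, ENNReal.ofReal (max (L ω - c) 0) ∂P := by
    rw [lintegral_eq_lintegral_meas_lt _ (Filter.Eventually.of_forall hnn) qmeas,
      lintegral_eq_lintegral_meas_lt _ (Filter.Eventually.of_forall hnn')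
        (hLi.aemeasurable)]
    apply lintegral_congr_ae
    filter_upwards [ae_restrict_mem measurableSet_Ioi] with t ht
    exact hmeasEq t ht
  have hfin : ∫⁻ ω, ENNReal.ofReal (max (L ω - c) 0) ∂P < ∞ := hLi.lintegral_lt_top
  have hint : IntegrableOn (fun u => max (leftQuantile P L u - c) 0) (Ioo (0:ℝ) 1) volume := by
    refine ⟨qmeas.aestronglyMeasurable, ?_⟩
    rw [hasFiniteIntegral_iff_ofReal (Filter.Eventually.of_forall hnn)]
    rw [hlint]; exact hfin
  refine ⟨hint, ?_⟩
  rw [integral_eq_lintegral_of_nonneg_ae (Filter.Eventually.of_forall hnn)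
      qmeas.aestronglyMeasurable,
    integral_eq_lintegral_of_nonneg_ae (Filter.Eventually.of_forall hnn')
      hLi.aestronglyMeasurable, hlint]


lemma quantile_integrableOn (hm : Measurable L) (hL : Integrable L P) {β : ℝ}
    (hβ : β ∈ Ioo (0:ℝ) 1) : IntegrableOn (leftQuantile P L) (Ioo β 1) volume := by
  have hsub : Ioo β 1 ⊆ Ioo (0:ℝ) 1 := Ioo_subset_Ioo hβ.1.le le_rfl
  have hdom : IntegrableOn
      (fun u => max (leftQuantile P L u - 0) 0 + |leftQuantile P L β|) (Ioo β 1) volume :=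
    ((key_identity hm hL 0).1.mono_set hsub).add (integrable_const _)
  apply Integrable.mono' hdom
  · exact ((quantile_aemeasurable hm).mono_measure
      (Measure.restrict_mono hsub le_rfl)).aestronglyMeasurable
  · filter_upwards [ae_restrict_mem measurableSet_Ioo] with u hu
    have hqm : leftQuantile P L β ≤ leftQuantile P L u :=
      quantile_mono hm hβ.1 hu.1.le hu.2
    rw [Real.norm_eq_abs, abs_le]
    constructor
    · have : -|leftQuantile P L β| ≤ leftQuantile P L β := neg_abs_le _
      have h0 : (0:ℝ) ≤ max (leftQuantile P L u - 0) 0 := le_max_right _ _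
      linarith
    · have : leftQuantile P L u - 0 ≤ max (leftQuantile P L u - 0) 0 := le_max_left _ _
      have : leftQuantile P L u ≤ max (leftQuantile P L u - 0) 0 := by linarith
      have h0 : (0:ℝ) ≤ |leftQuantile P L β| := abs_nonneg _
      linarith

lemma upper_bound (hm : Measurable L) (hL : Integrable L P) {β : ℝ} (hβ : β ∈ Ioo (0:ℝ) 1)
    (e : ℝ) :
    ∫ u in Ioo β 1, leftQuantile P L u ≤ (1-β) * e + ∫ ω, max (L ω - e) 0 ∂P := by
  have hsub : Ioo β 1 ⊆ Ioo (0:ℝ) 1 := Ioo_subset_Ioo hβ.1.le le_rfl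
  have hint1 : IntegrableOn (leftQuantile P L) (Ioo β 1) volume :=
    quantile_integrableOn hm hL hβ
  have hint2 : IntegrableOn (fun u => max (leftQuantile P L u - e) 0) (Ioo β 1) volume :=
    (key_identity hm hL e).1.mono_set hsub
  have h1 : ∫ u in Ioo β 1, leftQuantile P L u
      ≤ ∫ u in Ioo β 1, (e + max (leftQuantile P L u - e) 0) := by
    apply integral_mono_ae hint1 ((integrable_const e).add hint2)
    apply Filter.Eventually.of_forall
    intro u
    have := le_max_left (leftQuantile P L u - e) 0
    simp only [Pi.add_apply]
    linarith
  have h2 : ∫ u in Ioo β 1, (e + max (leftQuantile P L u - e) 0)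
      = (1-β) * e + ∫ u in Ioo β 1, max (leftQuantile P L u - e) 0 := by
    rw [integral_add (integrable_const e) hint2, setIntegral_const]
    simp only [smul_eq_mul, Real.volume_Ioo]
    rw [Real.volume_real_Ioo_of_le (by linarith [hβ.2])]
  have h3 : ∫ u in Ioo β 1, max (leftQuantile P L u - e) 0
      ≤ ∫ u in Ioo (0:ℝ) 1, max (leftQuantile P L u - e) 0 := by
    apply setIntegral_mono_set (key_identity hm hL e).1
    · exact Filter.Eventually.of_forall fun u => le_max_right _ _
    · exact HasSubset.Subset.eventuallyLE hsub
  have h4 := (key_identity hm hL e).2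
  linarith

lemma exact_eq (hm : Measurable L) (hL : Integrable L P) {β e : ℝ} (hβ : β ∈ Ioo (0:ℝ) 1)
    (hlow : (P {ω | L ω < e}).toReal ≤ β) (hhigh : β ≤ (P {ω | L ω ≤ e}).toReal) :
    ∫ u in Ioo β 1, leftQuantile P L u = (1-β) * e + ∫ ω, max (L ω - e) 0 ∂P := by
  have hsub : Ioo β 1 ⊆ Ioo (0:ℝ) 1 := Ioo_subset_Ioo hβ.1.le le_rfl
  have hint2 : IntegrableOn (fun u => max (leftQuantile P L u - e) 0) (Ioo β 1) volume :=
    (key_identity hm hL e).1.mono_set hsub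
  have h1 : ∫ u in Ioo β 1, leftQuantile P L u
      = ∫ u in Ioo β 1, (e + max (leftQuantile P L u - e) 0) := by
    apply setIntegral_congr_fun measurableSet_Ioo
    intro u hu
    have hq : e ≤ leftQuantile P L u := le_quantile hm hu.2 (lt_of_le_of_lt hlow hu.1)
    simp only
    rw [max_eq_left (by linarith)]
    ring
  have h2 : ∫ u in Ioo β 1, (e + max (leftQuantile P L u - e) 0)
      = (1-β) * e + ∫ u in Ioo β 1, max (leftQuantile P L u - e) 0 := by
    rw [integral_add (integrable_const e) hint2, setIntegral_const]
    simp only [smul_eq_mul, Real.volume_Ioo]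
    rw [Real.volume_real_Ioo_of_le (by linarith [hβ.2])]
  have h3 : ∫ u in Ioo β 1, max (leftQuantile P L u - e) 0
      = ∫ u in Ioo (0:ℝ) 1, max (leftQuantile P L u - e) 0 := by
    have hunion : Ioc (0:ℝ) β ∪ Ioo β 1 = Ioo (0:ℝ) 1 := Ioc_union_Ioo_eq_Ioo hβ.1.le hβ.2
    have hdisj : Disjoint (Ioc (0:ℝ) β) (Ioo β 1) := by
      apply Set.disjoint_left.2
      rintro u ⟨hu1, hu2⟩ ⟨hu3, hu4⟩
      exact absurd hu3 (not_lt.2 hu2)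
    have hzero : ∫ u in Ioc (0:ℝ) β, max (leftQuantile P L u - e) 0 = 0 := by
      rw [setIntegral_congr_fun measurableSet_Ioc (g := fun _ => (0:ℝ))]
      · simp
      · intro u hu
        have hq : leftQuantile P L u ≤ e :=
          (quantile_le_iff hm hu.1 (lt_of_le_of_lt hu.2 hβ.2) e).2 (le_trans hu.2 hhigh)
        simp only
        rw [max_eq_right (by linarith)]
    rw [← hunion, setIntegral_union hdisj measurableSet_Ioo
      ((key_identity hm hL e).1.mono_set (by rw [← hunion]; exact subset_union_left)) hint2,
      hzero, zero_add]
  rw [h1, h2, h3, (key_identity hm hL e).2]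


lemma pointwise_decomp (x y : ℝ) : x - y = max (x - y) 0 - max (y - x) 0 := by
  rcases le_total x y with h | h
  · rw [max_eq_right (by linarith), max_eq_left (by linarith)]; ring
  · rw [max_eq_left (by linarith), max_eq_right (by linarith)]; ring

lemma repval (hm : Measurable L) (hL : Integrable L P) {α γ e : ℝ}
    (hα : 1/2 < α) (hα1 : α < 1) (hg1 : (1-α)/α < γ) (hg2 : γ < 1)
    (he' : α * ∫ ω, max (L ω - e) 0 ∂P = (1-α) * ∫ ω, max (e - L ω) 0 ∂P) :
    ((1 - (((1+γ)*α - 1)/((2*α-1)*γ)))⁻¹ *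
          ∫ u in (((1+γ)*α - 1)/((2*α-1)*γ))..1, leftQuantile P L u) * (1 - γ)
        + γ * ∫ ω, L ω ∂P ≤ e ∧
    ((P {ω | L ω < e}).toReal ≤ ((1+γ)*α - 1)/((2*α-1)*γ) →
      ((1+γ)*α - 1)/((2*α-1)*γ) ≤ (P {ω | L ω ≤ e}).toReal →
      ((1 - (((1+γ)*α - 1)/((2*α-1)*γ)))⁻¹ *
          ∫ u in (((1+γ)*α - 1)/((2*α-1)*γ))..1, leftQuantile P L u) * (1 - γ)
        + γ * ∫ ω, L ω ∂P = e) := by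
  have hα0 : (0:ℝ) < α := by linarith
  have h2α : (0:ℝ) < 2*α - 1 := by linarith
  have h1α : (0:ℝ) < 1 - α := by linarith
  have hγpos : 0 < γ := lt_trans (div_pos h1α hα0) hg1
  have hnum : 0 < (1+γ)*α - 1 := by
    have := (div_lt_iff₀ hα0).1 hg1
    nlinarith
  set β := ((1+γ)*α - 1)/((2*α-1)*γ) with hβdef
  have hβpos : 0 < β := div_pos hnum (mul_pos h2α hγpos)
  have h1β : 1 - β = (1-γ)*(1-α)/((2*α-1)*γ) := by
    rw [hβdef, eq_div_iff (mul_pos h2α hγpos).ne', sub_mul, div_mul_cancel₀ _ (mul_pos h2α hγpos).ne']; ring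
  have hβlt1 : β < 1 := by
    have h : 0 < (1-γ)*(1-α)/((2*α-1)*γ) :=
      div_pos (mul_pos (by linarith : (0:ℝ) < 1-γ) h1α) (mul_pos h2α hγpos)
    rw [← h1β] at h; linarith
  have hβmem : β ∈ Ioo (0:ℝ) 1 := ⟨hβpos, hβlt1⟩
  have h1βpos : 0 < 1 - β := by linarith
  -- integrals
  set Ep := ∫ ω, max (L ω - e) 0 ∂P with hEp
  set Em := ∫ ω, max (e - L ω) 0 ∂P with hEm
  have hEpInt : Integrable (fun ω => max (L ω - e) 0) P :=
    (hL.sub (integrable_const e)).pos_part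
  have hEmInt : Integrable (fun ω => max (e - L ω) 0) P :=
    ((integrable_const e).sub hL).pos_part
  have hEL : ∫ ω, L ω ∂P = e + Ep - Em := by
    have h1 : ∫ ω, (L ω - e) ∂P = Ep - Em := by
      rw [show (fun ω => L ω - e) = fun ω => max (L ω - e) 0 - max (e - L ω) 0 from
        funext fun ω => pointwise_decomp (L ω) e]
      exact integral_sub hEpInt hEmInt
    have h2 : ∫ ω, (L ω - e) ∂P = (∫ ω, L ω ∂P) - e := by
      rw [integral_sub hL (integrable_const e), integral_const]
      simp [measure_univ]
    linarith
  -- interval integral to set integral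
  have hii : ∫ u in β..1, leftQuantile P L u
      = ∫ u in Ioo β 1, leftQuantile P L u := by
    rw [intervalIntegral.integral_of_le (by linarith), integral_Ioc_eq_integral_Ioo]
  have h1α' : (1:ℝ) - α ≠ 0 := ne_of_gt h1α
  have h1γ : (0:ℝ) < 1 - γ := by linarith
  have hfac : (1 - β)⁻¹ * (1 - γ) = (2*α-1)*γ/(1-α) := by
    rw [h1β, inv_div]
    rw [div_mul_eq_mul_div, div_eq_div_iff (mul_pos h1γ h1α).ne' h1α.ne']
    ring
  have hcoef : 0 < (1 - β)⁻¹ * (1 - γ) := mul_pos (inv_pos.2 h1βpos) h1γ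
  have hfinal : ∀ I : ℝ, ((1 - β)⁻¹ * I) * (1-γ) = ((1 - β)⁻¹ * (1-γ)) * I := fun I => by ring
  have htarget : ((1 - β)⁻¹ * (1 - γ)) * ((1-β)*e + Ep) + γ * ∫ ω, L ω ∂P = e := by
    have h3 : (1 - β)⁻¹ * (1 - γ) * (1 - β) = 1 - γ := by
      field_simp
    have h4 : ((1 - β)⁻¹ * (1 - γ)) * ((1-β)*e + Ep)
        = (1-γ)*e + ((2*α-1)*γ/(1-α)) * Ep := by
      rw [mul_add, ← mul_assoc, mul_comm ((1 - β)⁻¹ * (1 - γ)) (1-β)]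
      rw [mul_comm (1-β) ((1 - β)⁻¹ * (1 - γ))] at *
      rw [h3, hfac]
    rw [h4, hEL]
    have h5 : Em = α * Ep / (1-α) := by
      rw [eq_div_iff h1α']
      linarith [he']
    rw [h5]
    field_simp
    ring
  constructor
  · have hub := upper_bound hm hL hβmem e
    rw [hii, hfinal]
    rw [← hEp] at hub
    have h6 := mul_le_mul_of_nonneg_left hub (le_of_lt hcoef)
    linarith [htarget]
  · intro hlow hhigh
    have heq := exact_eq hm hL hβmem hlow hhigh
    rw [hii, hfinal, heq]
    exact htarget

end ExpAux

/-- the expectile representation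
`e_α(L) = sup { (1-γ)·ES_{((1+γ)α-1)/((2α-1)γ)}(L) + γ·E[L] : (1-α)/α < γ < 1 }`,
and for non-constant `L` the supremum is attained. -/
theorem expectile_sup_representation {Ω : Type*} [MeasurableSpace Ω] (P : Measure Ω)
    [IsProbabilityMeasure P] (L : Ω → ℝ) (hL : Integrable L P)
    (α : ℝ) (hα : 1 / 2 < α) (hα1 : α < 1) (e : ℝ) (he : IsExpectile P L α e) :
    e = sSup {r : ℝ | ∃ γ : ℝ, (1 - α) / α < γ ∧ γ < 1 ∧
        r = (1 - γ) * ES P L (((1 + γ) * α - 1) / ((2 * α - 1) * γ)) + γ * ∫ ω, L ω ∂P} ∧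
      ((¬ ∃ c : ℝ, ∀ᵐ ω ∂P, L ω = c) →
        ∃ γ : ℝ, (1 - α) / α < γ ∧ γ < 1 ∧
          e = (1 - γ) * ES P L (((1 + γ) * α - 1) / ((2 * α - 1) * γ)) + γ * ∫ ω, L ω ∂P) := by
  have hα' : (1:ℝ)/2 < α := hα
  obtain ⟨L', hL'meas, hLL'⟩ : ∃ L' : Ω → ℝ, Measurable L' ∧ L =ᵐ[P] L' :=
    ⟨hL.1.mk L, hL.1.measurable_mk, hL.1.ae_eq_mk⟩
  have hL' : Integrable L' P := hL.congr hLL'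
  have hα0 : (0:ℝ) < α := by linarith
  have h2α : (0:ℝ) < 2*α - 1 := by linarith
  have h1α : (0:ℝ) < 1 - α := by linarith
  have hFeq : ∀ m : ℝ, P {ω | L ω ≤ m} = P {ω | L' ω ≤ m} := fun m =>
    measure_congr (Filter.eventuallyEq_set.2 (by filter_upwards [hLL'] with ω h; simp [h]))
  have hqeq : leftQuantile P L = leftQuantile P L' := by
    funext u; unfold leftQuantile; simp_rw [hFeq]
  have hILeq : ∫ ω, L ω ∂P = ∫ ω, L' ω ∂P := integral_congr_ae hLL'
  have hEpeq : ∫ ω, max (L ω - e) 0 ∂P = ∫ ω, max (L' ω - e) 0 ∂P :=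
    integral_congr_ae (by filter_upwards [hLL'] with ω h; rw [h])
  have hEmeq : ∫ ω, max (e - L ω) 0 ∂P = ∫ ω, max (e - L' ω) 0 ∂P :=
    integral_congr_ae (by filter_upwards [hLL'] with ω h; rw [h])
  have he' : α * ∫ ω, max (L' ω - e) 0 ∂P = (1 - α) * ∫ ω, max (e - L' ω) 0 ∂P := by
    rw [← hEpeq, ← hEmeq]; exact he
  have hES : ∀ x : ℝ, ES P L x = (1 - x)⁻¹ * ∫ u in x..1, leftQuantile P L' u := by
    intro x; unfold ES; rw [hqeq]
  have hEpInt' : Integrable (fun ω => max (L' ω - e) 0) P :=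
    (hL'.sub (integrable_const e)).pos_part
  have hEmInt' : Integrable (fun ω => max (e - L' ω) 0) P :=
    ((integrable_const e).sub hL').pos_part
  -- upper bound
  have hub : ∀ r ∈ {r : ℝ | ∃ γ : ℝ, (1 - α) / α < γ ∧ γ < 1 ∧
      r = (1 - γ) * ES P L (((1 + γ) * α - 1) / ((2 * α - 1) * γ)) + γ * ∫ ω, L ω ∂P},
      r ≤ e := by
    rintro r ⟨γ, hg1, hg2, rfl⟩
    have hkey := (ExpAux.repval hL'meas hL' hα hα1 hg1 hg2 he').1
    rw [hES, hILeq]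
    linarith [hkey]
  -- the boundary probabilities
  set a := (P {ω | L' ω < e}).toReal with hadef
  set b := (P {ω | L' ω ≤ e}).toReal with hbdef
  have hab : a ≤ b := ENNReal.toReal_mono (measure_ne_top _ _)
    (measure_mono fun ω h => show L' ω ≤ e from le_of_lt h)
  have hb : 0 < b := by
    rcases eq_or_lt_of_le (ENNReal.toReal_nonneg : (0:ℝ) ≤ b) with h0 | h0
    · exfalso
      have hzero : P {ω | L' ω ≤ e} = 0 := by
        have h1 := h0.symm
        rw [ENNReal.toReal_eq_zero_iff] at h1
        exact h1.resolve_right (measure_ne_top _ _)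
      have hae : ∀ᵐ ω ∂P, ¬ (L' ω ≤ e) := measure_eq_zero_iff_ae_notMem.1 hzero
      have hEm0 : ∫ ω, max (e - L' ω) 0 ∂P = 0 := by
        apply integral_eq_zero_of_ae
        filter_upwards [hae] with ω h
        push_neg at h
        simp only [Pi.zero_apply]
        rw [max_eq_right (by linarith)]
      have hEp0 : ∫ ω, max (L' ω - e) 0 ∂P = 0 := by
        have h2 := he'
        rw [hEm0, mul_zero] at h2
        rcases mul_eq_zero.1 h2 with h3 | h3
        · exact absurd h3 (ne_of_gt hα0)
        · exact h3
      have haeLe : ∀ᵐ ω ∂P, L' ω ≤ e := by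
        have hnn : 0 ≤ᵐ[P] fun ω => max (L' ω - e) 0 :=
          Filter.Eventually.of_forall fun ω => le_max_right _ _
        have h4 := (integral_eq_zero_iff_of_nonneg_ae hnn hEpInt').1 hEp0
        filter_upwards [h4] with ω h
        simp only [Pi.zero_apply] at h
        have h5 := le_max_left (L' ω - e) 0
        rw [h] at h5; linarith
      have hone : P {ω | L' ω ≤ e} = 1 := by
        rw [← prob_compl_eq_zero_iff (s := {ω | L' ω ≤ e}) (hL'meas measurableSet_Iic)]
        rw [ae_iff] at haeLe
        exact haeLe
      rw [hone] at hzero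
      exact one_ne_zero hzero
    · exact h0
  have ha1 : a < 1 := by
    rcases lt_or_ge a 1 with h0 | h0
    · exact h0
    · exfalso
      have hale : a ≤ 1 := by
        rw [hadef, show (1:ℝ) = (1 : ℝ≥0∞).toReal by simp]
        exact ENNReal.toReal_mono ENNReal.one_ne_top prob_le_one
      have haone : P {ω | L' ω < e} = 1 := by
        rw [← ENNReal.toReal_eq_one_iff]
        exact le_antisymm hale h0 ▸ rfl
      have hae : ∀ᵐ ω ∂P, L' ω < e := by
        have hc : P {ω | L' ω < e}ᶜ = 0 :=
          (prob_compl_eq_zero_iff (measurableSet_lt hL'meas measurable_const)).2 haone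
        rw [ae_iff]
        exact hc
      have hEp0 : ∫ ω, max (L' ω - e) 0 ∂P = 0 := by
        apply integral_eq_zero_of_ae
        filter_upwards [hae] with ω h
        simp only [Pi.zero_apply]
        rw [max_eq_right (by linarith)]
      have hEm0 : ∫ ω, max (e - L' ω) 0 ∂P = 0 := by
        have h2 := he'
        rw [hEp0, mul_zero] at h2
        rcases mul_eq_zero.1 h2.symm with h3 | h3
        · exact absurd h3 (ne_of_gt h1α)
        · exact h3
      have haeGe : ∀ᵐ ω ∂P, e ≤ L' ω := by
        have hnn : 0 ≤ᵐ[P] fun ω => max (e - L' ω) 0 :=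
          Filter.Eventually.of_forall fun ω => le_max_right _ _
        have h4 := (integral_eq_zero_iff_of_nonneg_ae hnn hEmInt').1 hEm0
        filter_upwards [h4] with ω h
        simp only [Pi.zero_apply] at h
        have h5 := le_max_left (e - L' ω) 0
        rw [h] at h5; linarith
      have : (MeasureTheory.ae P).NeBot := ae_neBot.2 (IsProbabilityMeasure.ne_zero P)
      obtain ⟨ω, h1, h2⟩ := (hae.and haeGe).exists
      linarith
  -- choose β₀ and γ₀
  set β₀ := max a (min b (1/2)) with hβ₀def
  have hβ₀pos : 0 < β₀ := lt_max_of_lt_right (lt_min hb (by norm_num))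
  have hβ₀lt1 : β₀ < 1 := max_lt ha1 (lt_of_le_of_lt (min_le_right _ _) (by norm_num))
  have hβ₀a : a ≤ β₀ := le_max_left _ _
  have hβ₀b : β₀ ≤ b := max_le hab (min_le_left _ _)
  have h1β₀ : 0 < 1 - β₀ := by linarith
  set γ₀ := (1-α)/((1-β₀)*(2*α-1) + (1-α)) with hγ₀def
  have hden : 0 < (1-β₀)*(2*α-1) + (1-α) := add_pos (mul_pos h1β₀ h2α) h1α
  have hγ₀pos : 0 < γ₀ := div_pos h1α hden
  have hg1 : (1-α)/α < γ₀ := by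
    rw [hγ₀def]
    apply div_lt_div_of_pos_left h1α hden
    nlinarith [mul_pos hβ₀pos h2α]
  have hg2 : γ₀ < 1 := by
    rw [hγ₀def, div_lt_one hden]
    nlinarith [mul_pos h1β₀ h2α]
  have hβid : ((1+γ₀)*α - 1)/((2*α-1)*γ₀) = β₀ := by
    have hγD : γ₀ * ((1-β₀)*(2*α-1) + (1-α)) = 1-α := by
      rw [hγ₀def, div_mul_cancel₀ _ hden.ne']
    rw [div_eq_iff (mul_pos h2α hγ₀pos).ne']
    linear_combination hγD
  have hattain := (ExpAux.repval hL'meas hL' hα hα1 hg1 hg2 he').2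
  rw [hβid] at hattain
  have hval := hattain hβ₀a hβ₀b
  have heval : e = (1 - γ₀) * ES P L (((1 + γ₀) * α - 1) / ((2 * α - 1) * γ₀))
      + γ₀ * ∫ ω, L ω ∂P := by
    rw [hES, hβid, hILeq]
    linarith [hval]
  refine ⟨?_, fun _ => ⟨γ₀, hg1, hg2, heval⟩⟩
  apply le_antisymm
  · exact le_csSup ⟨e, hub⟩ ⟨γ₀, hg1, hg2, heval⟩
  · exact csSup_le ⟨e, ⟨γ₀, hg1, hg2, heval⟩⟩ hub
end

section
/- Let L be an integrable real random variable on a probability space (Ω,𝓕,P) and let 1/2 ≤ α < 1. Then e_α(L) = sup{ E[Z·L] : Z is a random variable with E[Z] = 1 and γ ≤ Z ≤ γα/(1−α) almost surely for some γ ∈ [(1−α)/α, 1] }, and the supremum is attained at Z* = (α·1_{L > e_α(L)} + (1−α)·1_{L ≤ e_α(L)}) / (α + (1−2α)·P[L ≤ e_α(L)]). -/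
open MeasureTheory Filter Topology Real Set
open scoped ENNReal

/-- dual representation of the expectile,
`e_α(L) = sup { E[Z·L] : E[Z] = 1, γ ≤ Z ≤ γα/(1-α) a.s. for some γ ∈ [(1-α)/α, 1] }`,
with the supremum attained at
`Z* = (α·1_{L>e} + (1-α)·1_{L≤e})/(α + (1-2α)P[L ≤ e])`. -/
theorem expectile_dual_representation {Ω : Type*} [MeasurableSpace Ω] (P : Measure Ω)
    [IsProbabilityMeasure P] (L : Ω → ℝ) (hL : Integrable L P)
    (α : ℝ) (hα : 1 / 2 ≤ α) (hα1 : α < 1) (e : ℝ) (he : IsExpectile P L α e)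
    (Zstar : Ω → ℝ)
    (hZstar : Zstar = fun ω =>
      (if e < L ω then α else 1 - α) / (α + (1 - 2 * α) * (P {ω' | L ω' ≤ e}).toReal)) :
    e = sSup {r : ℝ | ∃ Z : Ω → ℝ, ∃ γ : ℝ, (1 - α) / α ≤ γ ∧ γ ≤ 1 ∧ Measurable Z ∧
        (∫ ω, Z ω ∂P) = 1 ∧ (∀ᵐ ω ∂P, γ ≤ Z ω ∧ Z ω ≤ γ * α / (1 - α)) ∧
        r = ∫ ω, Z ω * L ω ∂P} ∧
      (∫ ω, Zstar ω ∂P) = 1 ∧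
      (∃ γ : ℝ, (1 - α) / α ≤ γ ∧ γ ≤ 1 ∧
        ∀ᵐ ω ∂P, γ ≤ Zstar ω ∧ Zstar ω ≤ γ * α / (1 - α)) ∧
      (∫ ω, Zstar ω * L ω ∂P) = e := by

  have hα0 : (0:ℝ) < α := by linarith
  have h1α : (0:ℝ) < 1 - α := by linarith
  obtain ⟨L', hL'meas, hLL'⟩ : ∃ L' : Ω → ℝ, Measurable L' ∧ L =ᵐ[P] L' :=
    ⟨hL.1.mk L, hL.1.measurable_mk, hL.1.ae_eq_mk⟩
  set s : Set Ω := {ω | L' ω ≤ e} with hs_def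
  have hs : MeasurableSet s := measurableSet_le hL'meas measurable_const
  have hPs : P {ω' | L ω' ≤ e} = P s := by
    apply measure_congr
    filter_upwards [hLL'] with ω h
    show (L ω ≤ e) = (L' ω ≤ e)
    rw [h]
  set p : ℝ := (P {ω' | L ω' ≤ e}).toReal with hp_def
  have hp' : p = (P s).toReal := by rw [hp_def, hPs]
  have hp0 : 0 ≤ p := ENNReal.toReal_nonneg
  have hp1 : p ≤ 1 := by
    rw [hp']
    calc (P s).toReal ≤ (1:ℝ≥0∞).toReal := ENNReal.toReal_mono ENNReal.one_ne_top prob_le_one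
      _ = 1 := by simp
  set D : ℝ := α + (1 - 2 * α) * p with hD_def
  have hD1 : 1 - α ≤ D := by
    rw [hD_def]
    nlinarith [mul_nonneg (by linarith : (0:ℝ) ≤ 2 * α - 1) (by linarith : (0:ℝ) ≤ 1 - p)]
  have hD2 : D ≤ α := by
    rw [hD_def]
    nlinarith [mul_nonneg (by linarith : (0:ℝ) ≤ 2 * α - 1) hp0]
  have hD : 0 < D := by linarith
  simp only [IsExpectile] at he
  -- the weight function
  set f : Ω → ℝ := fun ω => if e < L' ω then α else 1 - α with hf_def
  have hfmeas : Measurable f :=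
    Measurable.ite (measurableSet_lt measurable_const hL'meas) measurable_const measurable_const
  have hfint : Integrable f P := by
    refine Integrable.mono' (integrable_const 1) hfmeas.aestronglyMeasurable
      (ae_of_all _ fun ω => ?_)
    simp only [hf_def, Real.norm_eq_abs]
    split <;> rw [abs_of_nonneg (by linarith)] <;> linarith
  have hindint : Integrable (s.indicator fun _ => (1:ℝ)) P := (integrable_const 1).indicator hs
  have hA : ∫ ω, f ω ∂P = D := by
    have hfeq : f = fun ω => α - (2 * α - 1) * s.indicator (fun _ => (1:ℝ)) ω := by
      funext ω
      by_cases hm : ω ∈ s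
      · have h1 : ¬ e < L' ω := not_lt.mpr hm
        simp only [hf_def, if_neg h1, Set.indicator_of_mem hm]
        ring
      · have h1 : e < L' ω := not_le.mp hm
        simp only [hf_def, if_pos h1, Set.indicator_of_notMem hm]
        ring
    rw [hfeq, integral_sub (integrable_const α) (hindint.const_mul _), integral_const_mul,
      integral_indicator_const _ hs, integral_const]
    simp only [measureReal_def, measure_univ, ENNReal.toReal_one, smul_eq_mul, ← hp']
    rw [hD_def]; ring
  have hI1 : Integrable (fun ω => max (L ω - e) 0) P := (hL.sub (integrable_const e)).pos_part
  have hI2 : Integrable (fun ω => max (e - L ω) 0) P := ((integrable_const e).sub hL).pos_part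
  have haeB : (fun ω => f ω * (L' ω - e)) =ᵐ[P]
      fun ω => α * max (L ω - e) 0 - (1 - α) * max (e - L ω) 0 := by
    filter_upwards [hLL'] with ω h
    simp only [hf_def]
    by_cases hlt : e < L' ω
    · rw [if_pos hlt, h, max_eq_left (by linarith), max_eq_right (by linarith)]; ring
    · push_neg at hlt
      rw [if_neg (not_lt.mpr hlt), h, max_eq_right (by linarith), max_eq_left (by linarith)]
      ring
  have hBint : Integrable (fun ω => f ω * (L' ω - e)) P :=
    ((hI1.const_mul α).sub (hI2.const_mul (1 - α))).congr haeB.symm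
  have hB : ∫ ω, f ω * (L' ω - e) ∂P = 0 := by
    rw [integral_congr_ae haeB, integral_sub (hI1.const_mul α) (hI2.const_mul (1 - α)),
      integral_const_mul, integral_const_mul]
    linarith [he]
  have hC : ∫ ω, f ω * L' ω ∂P = e * D := by
    have heq : (fun ω => f ω * L' ω) = fun ω => f ω * (L' ω - e) + e * f ω := by
      funext ω; ring
    rw [heq, integral_add hBint (hfint.const_mul e), hB, integral_const_mul, hA]
    ring
  -- the candidate optimizer and its properties
  have hZmI : ∫ ω, f ω / D ∂P = 1 := by
    rw [integral_div, hA, div_self hD.ne']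
  have hZmL : ∫ ω, (f ω / D) * L ω ∂P = e := by
    have hae : (fun ω => (f ω / D) * L ω) =ᵐ[P] fun ω => D⁻¹ * (f ω * L' ω) := by
      filter_upwards [hLL'] with ω h
      rw [h]; ring
    rw [integral_congr_ae hae, integral_const_mul, hC]
    field_simp
  have hCs : ((1 - α) / D) * α / (1 - α) = α / D := by
    field_simp
  have hdivle : (1 - α) / D ≤ α / D := by
    rw [div_le_div_iff₀ hD hD]
    nlinarith
  have hγs1 : (1 - α) / α ≤ (1 - α) / D := by
    rw [div_le_div_iff₀ hα0 hD]
    nlinarith [mul_le_mul_of_nonneg_left hD2 h1α.le]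
  have hγs2 : (1 - α) / D ≤ 1 := (div_le_one hD).2 hD1
  have hbound_pt : ∀ x : ℝ, (1 - α) / D ≤ (if e < x then α else 1 - α) / D ∧
      (if e < x then α else 1 - α) / D ≤ ((1 - α) / D) * α / (1 - α) := by
    intro x
    rw [hCs]
    by_cases hx : e < x
    · rw [if_pos hx]; exact ⟨hdivle, le_refl _⟩
    · rw [if_neg hx]; exact ⟨le_refl _, hdivle⟩
  -- membership of e in the dual set
  have hmem : e ∈ {r : ℝ | ∃ Z : Ω → ℝ, ∃ γ : ℝ, (1 - α) / α ≤ γ ∧ γ ≤ 1 ∧ Measurable Z ∧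
      (∫ ω, Z ω ∂P) = 1 ∧ (∀ᵐ ω ∂P, γ ≤ Z ω ∧ Z ω ≤ γ * α / (1 - α)) ∧
      r = ∫ ω, Z ω * L ω ∂P} := by
    refine ⟨fun ω => f ω / D, (1 - α) / D, hγs1, hγs2, hfmeas.div_const D, hZmI,
      ae_of_all _ fun ω => ?_, hZmL.symm⟩
    simpa only [hf_def] using hbound_pt (L' ω)
  -- upper bound
  have hub : ∀ r ∈ {r : ℝ | ∃ Z : Ω → ℝ, ∃ γ : ℝ, (1 - α) / α ≤ γ ∧ γ ≤ 1 ∧ Measurable Z ∧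
      (∫ ω, Z ω ∂P) = 1 ∧ (∀ᵐ ω ∂P, γ ≤ Z ω ∧ Z ω ≤ γ * α / (1 - α)) ∧
      r = ∫ ω, Z ω * L ω ∂P}, r ≤ e := by
    rintro r ⟨Z, γ, hγ1, hγ2, hZmeas, hZ1, hbnd, rfl⟩
    have hγpos : 0 < γ := lt_of_lt_of_le (div_pos h1α hα0) hγ1
    set C : ℝ := γ * α / (1 - α) with hC_def
    have hCpos : 0 < C := div_pos (mul_pos hγpos hα0) h1α
    have hZint : Integrable Z P := by
      refine Integrable.mono' (integrable_const C) hZmeas.aestronglyMeasurable ?_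
      filter_upwards [hbnd] with ω h
      rw [Real.norm_eq_abs, abs_of_nonneg (le_trans hγpos.le h.1)]
      exact h.2
    have hZL : Integrable (fun ω => Z ω * L ω) P := by
      refine Integrable.mono' (hL.abs.const_mul C) (hZmeas.aestronglyMeasurable.mul hL.1) ?_
      filter_upwards [hbnd] with ω h
      rw [Real.norm_eq_abs, abs_mul, abs_of_nonneg (le_trans hγpos.le h.1)]
      exact mul_le_mul_of_nonneg_right h.2 (abs_nonneg _)
    have hZm1 : Integrable (fun ω => Z ω * max (L ω - e) 0) P := by
      refine Integrable.mono' (hI1.const_mul C) (hZmeas.aestronglyMeasurable.mul hI1.1) ?_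
      filter_upwards [hbnd] with ω h
      rw [Real.norm_eq_abs, abs_mul, abs_of_nonneg (le_trans hγpos.le h.1),
        abs_of_nonneg (le_max_right _ _)]
      exact mul_le_mul_of_nonneg_right h.2 (le_max_right _ _)
    have hZm2 : Integrable (fun ω => Z ω * max (e - L ω) 0) P := by
      refine Integrable.mono' (hI2.const_mul C) (hZmeas.aestronglyMeasurable.mul hI2.1) ?_
      filter_upwards [hbnd] with ω h
      rw [Real.norm_eq_abs, abs_mul, abs_of_nonneg (le_trans hγpos.le h.1),
        abs_of_nonneg (le_max_right _ _)]
      exact mul_le_mul_of_nonneg_right h.2 (le_max_right _ _)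
    have hmono1 : ∫ ω, Z ω * max (L ω - e) 0 ∂P ≤ C * ∫ ω, max (L ω - e) 0 ∂P := by
      rw [← integral_const_mul]
      refine integral_mono_ae hZm1 (hI1.const_mul C) ?_
      filter_upwards [hbnd] with ω h
      exact mul_le_mul_of_nonneg_right h.2 (le_max_right _ _)
    have hmono2 : γ * ∫ ω, max (e - L ω) 0 ∂P ≤ ∫ ω, Z ω * max (e - L ω) 0 ∂P := by
      rw [← integral_const_mul]
      refine integral_mono_ae (hI2.const_mul γ) hZm2 ?_
      filter_upwards [hbnd] with ω h
      exact mul_le_mul_of_nonneg_right h.1 (le_max_right _ _)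
    have hkey : C * ∫ ω, max (L ω - e) 0 ∂P = γ * ∫ ω, max (e - L ω) 0 ∂P := by
      rw [hC_def]
      field_simp
      linear_combination he
    have hsplit : ∫ ω, (Z ω * L ω - e * Z ω) ∂P =
        ∫ ω, Z ω * max (L ω - e) 0 ∂P - ∫ ω, Z ω * max (e - L ω) 0 ∂P := by
      rw [← integral_sub hZm1 hZm2]
      refine integral_congr_ae (ae_of_all _ fun ω => ?_)
      have hm : max (L ω - e) 0 - max (e - L ω) 0 = L ω - e := by
        rcases le_total (L ω) e with h | h
        · rw [max_eq_right (by linarith), max_eq_left (by linarith)]; ring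
        · rw [max_eq_left (by linarith), max_eq_right (by linarith)]; ring
      have h2 : Z ω * (max (L ω - e) 0 - max (e - L ω) 0) = Z ω * (L ω - e) := by rw [hm]
      show Z ω * L ω - e * Z ω = Z ω * max (L ω - e) 0 - Z ω * max (e - L ω) 0
      linear_combination -h2
    have hsub : ∫ ω, (Z ω * L ω - e * Z ω) ∂P = (∫ ω, Z ω * L ω ∂P) - e := by
      rw [integral_sub hZL (hZint.const_mul e), integral_const_mul, hZ1, mul_one]
    linarith [hsplit, hsub, hmono1, hmono2, hkey]
  -- Zstar is a.e. equal to the candidate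
  have hZstarAe : Zstar =ᵐ[P] fun ω => f ω / D := by
    filter_upwards [hLL'] with ω h
    rw [hZstar]
    simp only [hf_def, h]
  refine ⟨le_antisymm (le_csSup ⟨e, fun r hr => hub r hr⟩ hmem) (csSup_le ⟨e, hmem⟩ hub),
    ?_, ?_, ?_⟩
  · rw [integral_congr_ae hZstarAe]; exact hZmI
  · refine ⟨(1 - α) / D, hγs1, hγs2, ae_of_all _ fun ω => ?_⟩
    simp only [hZstar]
    exact hbound_pt (L ω)
  · have hae : (fun ω => Zstar ω * L ω) =ᵐ[P] fun ω => (f ω / D) * L ω :=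
      hZstarAe.mono fun ω h => by simp only [h]
    rw [integral_congr_ae hae]
    exact hZmL
end

section
/- Let L be an integrable real random variable on a probability space (Ω,𝓕,P) with E[L] = 0, and let 1/2 ≤ α < 1. Then for every 0 < β < 1 it holds that (1 − (1−α)/(α + (1−2α)β))·ES_β(L) ≤ e_α(L) ≤ (1 − (1−α)/α)·ES_α(L) ≤ ES_{(2α−1)/α}(L). -/
open MeasureTheory Filter Topology Real Set
open scoped ENNReal

section QFacts

open ProbabilityTheory

noncomputable def qf (ν : Measure ℝ) (u : ℝ) : ℝ :=
  sInf {m : ℝ | u ≤ (ν (Iic m)).toReal}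

variable {ν : Measure ℝ} [IsProbabilityMeasure ν]

lemma qf_set_eq (u : ℝ) : {m : ℝ | u ≤ (ν (Iic m)).toReal} = {m : ℝ | u ≤ cdf ν m} := by
  ext m; simp only [mem_setOf_eq, cdf_eq_real, Measure.real]

lemma qf_le_iff {u m : ℝ} (hu0 : 0 < u) (hu1 : u < 1) :
    qf ν u ≤ m ↔ u ≤ cdf ν m := by
  have hne : {m : ℝ | u ≤ cdf ν m}.Nonempty := by
    have h := (tendsto_cdf_atTop ν).eventually (eventually_ge_nhds hu1)
    exact h.exists
  have hbdd : BddBelow {m : ℝ | u ≤ cdf ν m} := by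
    obtain ⟨x0, hx0⟩ := ((tendsto_cdf_atBot ν).eventually (eventually_lt_nhds hu0)).exists
    exact ⟨x0, fun x hx => by
      by_contra hlt
      push_neg at hlt
      exact absurd (le_trans hx (monotone_cdf ν hlt.le)) (not_le.mpr hx0)⟩
  rw [qf, qf_set_eq]
  constructor
  · intro hle
    have hq : u ≤ cdf ν (sInf {m : ℝ | u ≤ cdf ν m}) := by
      set q := sInf {m : ℝ | u ≤ cdf ν m} with hqdef
      have htd : Tendsto (cdf ν) (𝓝[>] q) (𝓝 (cdf ν q)) :=
        ((cdf ν).right_continuous q).mono_left (nhdsWithin_mono _ Ioi_subset_Ici_self)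
      refine ge_of_tendsto htd ?_
      filter_upwards [self_mem_nhdsWithin] with x hx
      obtain ⟨s, hs, hsx⟩ := exists_lt_of_csInf_lt hne hx
      exact le_trans hs (monotone_cdf ν hsx.le)
    exact le_trans hq (monotone_cdf ν hle)
  · intro hm
    exact csInf_le hbdd hm

lemma qf_monotoneOn : MonotoneOn (qf ν) (Ioo 0 1) := by
  intro u hu v hv huv
  rw [qf_le_iff hu.1 hu.2]
  exact le_trans huv ((qf_le_iff hv.1 hv.2).mp le_rfl)

lemma qf_aemeasurable : AEMeasurable (qf ν) (volume.restrict (Ioo 0 1)) :=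
  aemeasurable_restrict_of_monotoneOn measurableSet_Ioo qf_monotoneOn

instance : IsProbabilityMeasure (volume.restrict (Ioo (0:ℝ) 1)) := by
  constructor
  rw [Measure.restrict_apply MeasurableSet.univ]
  simp [Real.volume_Ioo]

lemma qf_map_eq : (volume.restrict (Ioo (0:ℝ) 1)).map (qf ν) = ν := by
  have hqm := (qf_aemeasurable (ν := ν))
  haveI : IsProbabilityMeasure ((volume.restrict (Ioo (0:ℝ) 1)).map (qf ν)) :=
    Measure.isProbabilityMeasure_map hqm
  refine Measure.ext_of_Iic _ _ (fun m => ?_)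
  rw [Measure.map_apply_of_aemeasurable hqm measurableSet_Iic,
    Measure.restrict_apply' measurableSet_Ioo]
  have hset : qf ν ⁻¹' Iic m ∩ Ioo 0 1 = Iic (cdf ν m) ∩ Ioo 0 1 := by
    ext u
    simp only [mem_inter_iff, mem_preimage, mem_Iic, mem_Ioo, and_congr_left_iff]
    intro hu
    rw [qf_le_iff hu.1 hu.2]
  rw [hset, ← ofReal_cdf ν m]
  have h1 : cdf ν m ≤ 1 := cdf_le_one ν m
  refine le_antisymm ?_ ?_
  · calc volume (Iic (cdf ν m) ∩ Ioo 0 1) ≤ volume (Ioc 0 (cdf ν m)) := by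
          apply measure_mono; rintro x ⟨hx1, hx2, _⟩; exact ⟨hx2, hx1⟩
    _ = ENNReal.ofReal (cdf ν m) := by rw [Real.volume_Ioc, sub_zero]
  · calc ENNReal.ofReal (cdf ν m) = volume (Ioo 0 (cdf ν m)) := by
          rw [Real.volume_Ioo, sub_zero]
    _ ≤ volume (Iic (cdf ν m) ∩ Ioo 0 1) := by
          apply measure_mono; rintro x ⟨hx1, hx2⟩
          exact ⟨hx2.le, hx1, lt_of_lt_of_le hx2 h1⟩

lemma qf_transfer (g : ℝ → ℝ) (hg : Continuous g) (hgi : Integrable g ν) :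
    (∫ u in Ioo (0:ℝ) 1, g (qf ν u)) = ∫ x, g x ∂ν ∧
      IntegrableOn (fun u => g (qf ν u)) (Ioo (0:ℝ) 1) := by
  constructor
  · have h := integral_map (φ := qf ν) (qf_aemeasurable (ν := ν)) (f := g)
      hg.aestronglyMeasurable
    rw [qf_map_eq] at h
    exact h.symm
  · exact (integrable_map_measure hg.aestronglyMeasurable qf_aemeasurable).mp
      (by rwa [qf_map_eq])

end QFacts

theorem split_lemma {h : ℝ → ℝ} {a m b : ℝ} (ham : a ≤ m) (hmb : m ≤ b)
    (hint : IntegrableOn h (Ioo a b)) :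
    ∫ u in Ioo a b, h u = (∫ u in Ioo a m, h u) + ∫ u in Ioo m b, h u := by
  have h1 : IntegrableOn h (Ioc a m) := by
    rw [integrableOn_Ioc_iff_integrableOn_Ioo]
    exact hint.mono_set (Ioo_subset_Ioo_right hmb)
  have h2 : IntegrableOn h (Ioc m b) := by
    rw [integrableOn_Ioc_iff_integrableOn_Ioo]
    exact hint.mono_set (Ioo_subset_Ioo_left ham)
  rw [setIntegral_congr_set Ioo_ae_eq_Ioc, setIntegral_congr_set (Ioo_ae_eq_Ioc (a := a) (b := m)),
    setIntegral_congr_set (Ioo_ae_eq_Ioc (a := m) (b := b)),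
    ← Ioc_union_Ioc_eq_Ioc ham hmb,
    setIntegral_union (Ioc_disjoint_Ioc_of_le le_rfl) measurableSet_Ioc h1 h2]

theorem avg_lemma {h : ℝ → ℝ} (hmono : MonotoneOn h (Ioo 0 1))
    (hint : IntegrableOn h (Ioo 0 1))
    {a m b : ℝ} (h0a : 0 ≤ a) (ham : a ≤ m) (hmb : m ≤ b) (hb1 : b ≤ 1) :
    (b - m) * ∫ u in Ioo a m, h u ≤ (m - a) * ∫ u in Ioo m b, h u := by
  rcases eq_or_lt_of_le ham with rfl | ham'
  · simp
  rcases eq_or_lt_of_le hmb with rfl | hmb'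
  · simp
  have hm0 : 0 < m := lt_of_le_of_lt h0a ham'
  have hm1 : m < 1 := lt_of_lt_of_le hmb' hb1
  have hs1 : Ioo a m ⊆ Ioo 0 1 := fun x hx =>
    ⟨lt_of_le_of_lt h0a hx.1, lt_of_lt_of_le (lt_of_lt_of_le hx.2 hmb) hb1⟩
  have hs2 : Ioo m b ⊆ Ioo 0 1 := fun x hx =>
    ⟨lt_trans hm0 hx.1, lt_of_lt_of_le hx.2 hb1⟩
  have hint1 : IntegrableOn h (Ioo a m) := hint.mono_set hs1
  have hint2 : IntegrableOn h (Ioo m b) := hint.mono_set hs2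
  have hc1 : IntegrableOn (fun _ => h m) (Ioo a m) := by
    refine integrableOn_const ?_
    rw [Real.volume_Ioo]; exact ENNReal.ofReal_ne_top
  have hc2 : IntegrableOn (fun _ => h m) (Ioo m b) := by
    refine integrableOn_const ?_
    rw [Real.volume_Ioo]; exact ENNReal.ofReal_ne_top
  have h1 : ∫ u in Ioo a m, h u ≤ (m - a) * h m := by
    have := setIntegral_mono_on hint1 hc1 measurableSet_Ioo
      (fun x hx => hmono (hs1 hx) ⟨hm0, hm1⟩ hx.2.le)
    rwa [setIntegral_const, Real.volume_real_Ioo_of_le (by linarith), smul_eq_mul]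
      at this
  have h2 : (b - m) * h m ≤ ∫ u in Ioo m b, h u := by
    have := setIntegral_mono_on hc2 hint2 measurableSet_Ioo
      (fun x hx => hmono ⟨hm0, hm1⟩ (hs2 hx) hx.1.le)
    rwa [setIntegral_const, Real.volume_real_Ioo_of_le (by linarith), smul_eq_mul]
      at this
  calc (b - m) * ∫ u in Ioo a m, h u ≤ (b - m) * ((m - a) * h m) :=
        mul_le_mul_of_nonneg_left h1 (by linarith)
  _ = (m - a) * ((b - m) * h m) := by ring
  _ ≤ (m - a) * ∫ u in Ioo m b, h u := mul_le_mul_of_nonneg_left h2 (by linarith)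

theorem avg_lemma_anti {h : ℝ → ℝ} (hanti : AntitoneOn h (Ioo 0 1))
    (hint : IntegrableOn h (Ioo 0 1))
    {a m b : ℝ} (h0a : 0 ≤ a) (ham : a ≤ m) (hmb : m ≤ b) (hb1 : b ≤ 1) :
    (m - a) * ∫ u in Ioo m b, h u ≤ (b - m) * ∫ u in Ioo a m, h u := by
  have hmono : MonotoneOn (fun u => -h u) (Ioo 0 1) :=
    fun u hu v hv huv => neg_le_neg (hanti hu hv huv)
  have := avg_lemma hmono hint.neg h0a ham hmb hb1
  rw [integral_neg, integral_neg] at this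
  linarith


set_option maxHeartbeats 1000000 in
/-- for centered `L` and every `0 < β < 1`,
`(1 - (1-α)/(α+(1-2α)β))·ES_β(L) ≤ e_α(L) ≤ (1-(1-α)/α)·ES_α(L) ≤ ES_{(2α-1)/α}(L)`. -/
theorem expectile_bounds {Ω : Type*} [MeasurableSpace Ω] (P : Measure Ω)
    [IsProbabilityMeasure P] (L : Ω → ℝ) (hL : Integrable L P)
    (hmean : (∫ ω, L ω ∂P) = 0) (α : ℝ) (hα : 1 / 2 ≤ α) (hα1 : α < 1)
    (β : ℝ) (hβ : 0 < β) (hβ1 : β < 1) (e : ℝ) (he : IsExpectile P L α e) :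
    (1 - (1 - α) / (α + (1 - 2 * α) * β)) * ES P L β ≤ e ∧
      e ≤ (1 - (1 - α) / α) * ES P L α ∧
      (1 - (1 - α) / α) * ES P L α ≤ ES P L ((2 * α - 1) / α) := by
  have hLm : AEMeasurable L P := hL.aemeasurable
  set ν : Measure ℝ := P.map L with hν
  haveI : IsProbabilityMeasure ν := Measure.isProbabilityMeasure_map hLm
  have hqeq : leftQuantile P L = qf ν := by
    funext u
    rw [leftQuantile, qf]
    congr 1
    ext m
    have h : ν (Iic m) = P {ω | L ω ≤ m} := by
      rw [hν, Measure.map_apply_of_aemeasurable hLm measurableSet_Iic]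
      rfl
    simp only [mem_setOf_eq, h]
  set q : ℝ → ℝ := qf ν with hqdef
  have hα0 : (0:ℝ) < α := by linarith
  have h1α : (0:ℝ) < 1 - α := by linarith
  have hs : (0:ℝ) ≤ 2 * α - 1 := by linarith
  -- transfer lemma specialized
  have key : ∀ g : ℝ → ℝ, Continuous g → Integrable (fun ω => g (L ω)) P →
      (∫ u in Ioo (0:ℝ) 1, g (q u)) = (∫ ω, g (L ω) ∂P) ∧
        IntegrableOn (fun u => g (q u)) (Ioo (0:ℝ) 1) := by
    intro g hg hgi
    have hgi' : Integrable g ν := by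
      rw [hν, integrable_map_measure hg.aestronglyMeasurable hLm]
      exact hgi
    obtain ⟨h1, h2⟩ := qf_transfer g hg hgi'
    refine ⟨?_, h2⟩
    rw [h1, hν, integral_map hLm hg.aestronglyMeasurable]
  have keyid := key (fun x => x) continuous_id hL
  have hqint : IntegrableOn q (Ioo (0:ℝ) 1) := keyid.2
  have hT : (∫ u in Ioo (0:ℝ) 1, q u) = 0 := keyid.1.trans hmean
  have keyp := key (fun x => max (x - e) 0)
    ((continuous_id.sub continuous_const).max continuous_const)
    (hL.sub (integrable_const e)).pos_part
  have keym := key (fun x => max (e - x) 0)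
    ((continuous_const.sub continuous_id).max continuous_const)
    ((integrable_const e).sub hL).pos_part
  set P₀ : ℝ := ∫ u in Ioo (0:ℝ) 1, max (q u - e) 0 with hP₀
  set N₀ : ℝ := ∫ u in Ioo (0:ℝ) 1, max (e - q u) 0 with hN₀
  have hGp : IntegrableOn (fun u => max (q u - e) 0) (Ioo (0:ℝ) 1) := keyp.2
  have hGm : IntegrableOn (fun u => max (e - q u) 0) (Ioo (0:ℝ) 1) := keym.2
  have hPN : α * P₀ = (1 - α) * N₀ := by rw [keyp.1, keym.1]; exact he
  have hP0 : 0 ≤ P₀ :=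
    setIntegral_nonneg measurableSet_Ioo (fun x _ => le_max_right _ _)
  have hN0 : 0 ≤ N₀ :=
    setIntegral_nonneg measurableSet_Ioo (fun x _ => le_max_right _ _)
  have hid : ∀ y z : ℝ, y - z = max (y - z) 0 - max (z - y) 0 := by
    intro y z
    rcases le_total y z with h | h
    · rw [max_eq_right (by linarith), max_eq_left (by linarith)]; ring
    · rw [max_eq_left (by linarith), max_eq_right (by linarith)]; ring
  have hmono : MonotoneOn q (Ioo 0 1) := qf_monotoneOn
  -- e = N₀ - P₀
  have hconst : ∀ a b : ℝ, IntegrableOn (fun _ => e) (Ioo a b) := by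
    intro a b
    refine integrableOn_const ?_
    rw [Real.volume_Ioo]; exact ENNReal.ofReal_ne_top
  have hsub : (∫ u in Ioo (0:ℝ) 1, (q u - e)) = -e := by
    rw [integral_sub hqint (hconst 0 1), hT, setIntegral_const,
      Real.volume_real_Ioo_of_le (by norm_num), smul_eq_mul]
    ring
  have hePN : P₀ - N₀ = -e := by
    rw [hP₀, hN₀, ← integral_sub hGp hGm]
    rw [← hsub]
    exact setIntegral_congr_fun measurableSet_Ioo (fun x _ => (hid (q x) e).symm)
  have hPe : (2 * α - 1) * P₀ = (1 - α) * e := by nlinarith [hPN, hePN]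
  -- threshold c = F(e)
  set c : ℝ := ProbabilityTheory.cdf ν e with hc
  have hc0 : 0 ≤ c := ProbabilityTheory.cdf_nonneg ν e
  have hc1 : c ≤ 1 := ProbabilityTheory.cdf_le_one ν e
  have hqle : ∀ u, u ∈ Ioo (0:ℝ) 1 → (q u ≤ e ↔ u ≤ c) := fun u hu =>
    qf_le_iff hu.1 hu.2
  have hgp0 : ∀ u, u ∈ Ioo (0:ℝ) 1 → u ≤ c → max (q u - e) 0 = 0 := by
    intro u hu huc
    rw [max_eq_right]
    have := (hqle u hu).mpr huc
    linarith
  have hgm0 : ∀ u, u ∈ Ioo (0:ℝ) 1 → c < u → max (e - q u) 0 = 0 := by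
    intro u hu huc
    rw [max_eq_right]
    have := (hqle u hu).not.mpr (not_le.mpr huc)
    push_neg at this
    linarith
  -- main inequality : (1-α) P₀ ≤ ∫_{(α,1)} (q - e)
  have hGpmono : MonotoneOn (fun u => max (q u - e) 0) (Ioo 0 1) := by
    intro u hu v hv huv
    exact max_le_max (by linarith [hmono hu hv huv]) le_rfl
  have hGmanti : AntitoneOn (fun u => max (e - q u) 0) (Ioo 0 1) := by
    intro u hu v hv huv
    exact max_le_max (by linarith [hmono hu hv huv]) le_rfl
  have hD : (1 - α) * P₀ ≤ ∫ u in Ioo α 1, (q u - e) := by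
    have hsplit : (∫ u in Ioo α 1, (q u - e)) =
        (∫ u in Ioo α 1, max (q u - e) 0) - ∫ u in Ioo α 1, max (e - q u) 0 := by
      rw [← integral_sub (hGp.mono_set (Ioo_subset_Ioo_left (by linarith)))
        (hGm.mono_set (Ioo_subset_Ioo_left (by linarith)))]
      exact setIntegral_congr_fun measurableSet_Ioo (fun x _ => hid (q x) e)
    by_cases hcα : α ≤ c
    · -- the positive part integral over (α,1) is all of P₀
      have hz : (∫ u in Ioo (0:ℝ) α, max (q u - e) 0) = 0 := by
        rw [setIntegral_congr_fun measurableSet_Ioo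
          (fun x hx => hgp0 x ⟨hx.1, by linarith [hx.2]⟩ (le_trans hx.2.le hcα))]
        simp
      have hPsplit : P₀ = (∫ u in Ioo (0:ℝ) α, max (q u - e) 0) +
          ∫ u in Ioo α 1, max (q u - e) 0 :=
        split_lemma (by linarith) (by linarith) hGp
      have hPmain : (∫ u in Ioo α 1, max (q u - e) 0) = P₀ := by
        rw [hPsplit, hz, zero_add]
      -- decompose N₀
      have hzm : (∫ u in Ioo c 1, max (e - q u) 0) = 0 := by
        rw [setIntegral_congr_fun measurableSet_Ioo
          (fun x hx => hgm0 x ⟨by linarith [hx.1], hx.2⟩ hx.1)]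
        simp
      have hNsplit : N₀ = ((∫ u in Ioo (0:ℝ) α, max (e - q u) 0) +
          ∫ u in Ioo α c, max (e - q u) 0) + ∫ u in Ioo c 1, max (e - q u) 0 := by
        rw [hN₀, split_lemma (le_trans (by linarith) hcα) hc1 hGm,
          split_lemma (by linarith : (0:ℝ) ≤ α) hcα
            (hGm.mono_set (Ioo_subset_Ioo_right hc1))]
      set X : ℝ := ∫ u in Ioo (0:ℝ) α, max (e - q u) 0 with hX
      set Y : ℝ := ∫ u in Ioo α c, max (e - q u) 0 with hY
      have hX0 : 0 ≤ X :=
        setIntegral_nonneg measurableSet_Ioo (fun x _ => le_max_right _ _)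
      have hY0 : 0 ≤ Y :=
        setIntegral_nonneg measurableSet_Ioo (fun x _ => le_max_right _ _)
      have havg : α * Y ≤ (c - α) * X := by
        have := avg_lemma_anti hGmanti hGm (le_refl (0:ℝ)) (by linarith) hcα hc1
        simpa using this
      have hNXY : N₀ = X + Y := by rw [hNsplit, hzm, add_zero]
      -- Y ≤ (1-α) N₀
      have hYN : Y ≤ (1 - α) * N₀ := by
        have hcpos : 0 < c := lt_of_lt_of_le (by linarith) hcα
        nlinarith [havg, hNXY, hX0, hY0, hN0]
      -- ∫_{(α,1)} Gm = Y
      have hGmmain : (∫ u in Ioo α 1, max (e - q u) 0) = Y := by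
        rw [split_lemma hcα hc1 (hGm.mono_set (Ioo_subset_Ioo_left (by linarith))), hzm,
          add_zero]
      rw [hsplit, hPmain, hGmmain]
      linarith [hYN, hPN]
    · -- c < α
      push_neg at hcα
      have hzm : (∫ u in Ioo α 1, max (e - q u) 0) = 0 := by
        rw [setIntegral_congr_fun measurableSet_Ioo
          (fun x hx => hgm0 x ⟨by linarith [hx.1], hx.2⟩ (lt_trans hcα hx.1))]
        simp
      have hz : (∫ u in Ioo (0:ℝ) c, max (q u - e) 0) = 0 := by
        rw [setIntegral_congr_fun measurableSet_Ioo
          (fun x hx => hgp0 x ⟨hx.1, by linarith [hx.2, hcα]⟩ hx.2.le)]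
        simp
      have hPsplit : P₀ = (∫ u in Ioo (0:ℝ) c, max (q u - e) 0) +
          ((∫ u in Ioo c α, max (q u - e) 0) + ∫ u in Ioo α 1, max (q u - e) 0) := by
        rw [hP₀, split_lemma hc0 (by linarith : c ≤ 1) hGp,
          split_lemma hcα.le (by linarith : α ≤ 1) (hGp.mono_set (Ioo_subset_Ioo_left hc0))]
      set X : ℝ := ∫ u in Ioo c α, max (q u - e) 0 with hX
      set Y : ℝ := ∫ u in Ioo α 1, max (q u - e) 0 with hY
      have hY0 : 0 ≤ Y :=
        setIntegral_nonneg measurableSet_Ioo (fun x _ => le_max_right _ _)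
      have havg : (1 - α) * X ≤ (α - c) * Y := by
        have := avg_lemma hGpmono hGp hc0 hcα.le (by linarith : α ≤ 1) le_rfl
        simpa using this
      have hPXY : P₀ = X + Y := by rw [hPsplit, hz, zero_add]
      rw [hsplit, hzm, sub_zero]
      nlinarith [havg, hPXY, hY0, hc0]
  -- ES in terms of integrals over Ioo
  have hES : ∀ t : ℝ, 0 ≤ t → t ≤ 1 → ES P L t = (1 - t)⁻¹ * ∫ u in Ioo t 1, q u := by
    intro t ht0 ht1
    simp only [ES, hqeq]
    rw [intervalIntegral.integral_of_le ht1, integral_Ioc_eq_integral_Ioo]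
  have h1β : (0:ℝ) < 1 - β := by linarith
  -- FIRST INEQUALITY
  have goal1 : (1 - (1 - α) / (α + (1 - 2 * α) * β)) * ES P L β ≤ e := by
    have hd : (0:ℝ) < α + (1 - 2 * α) * β := by nlinarith [mul_nonneg hs h1β.le]
    set Iβ : ℝ := ∫ u in Ioo β 1, q u with hIβdef
    have hqintβ : IntegrableOn q (Ioo β 1) := hqint.mono_set (Ioo_subset_Ioo_left hβ.le)
    have hGβ : (∫ u in Ioo β 1, (q u - e)) = Iβ - (1 - β) * e := by
      rw [integral_sub hqintβ (hconst β 1), setIntegral_const,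
        Real.volume_real_Ioo_of_le (by linarith), smul_eq_mul]
    have hbound : (∫ u in Ioo β 1, (q u - e)) ≤ P₀ := by
      calc (∫ u in Ioo β 1, (q u - e)) ≤ ∫ u in Ioo β 1, max (q u - e) 0 :=
            setIntegral_mono_on (hqintβ.sub (hconst β 1))
              (hGp.mono_set (Ioo_subset_Ioo_left hβ.le)) measurableSet_Ioo
              (fun x _ => le_max_left _ _)
      _ ≤ P₀ := setIntegral_mono_set hGp
            (Filter.Eventually.of_forall (fun x => le_max_right _ _))
            ((Ioo_subset_Ioo_left hβ.le).eventuallyLE)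
    have hmul : (2 * α - 1) * (Iβ - (1 - β) * e) ≤ (2 * α - 1) * P₀ := by
      rw [← hGβ]
      exact mul_le_mul_of_nonneg_left hbound hs
    have key1 : (2 * α - 1) * Iβ ≤ (α + (1 - 2 * α) * β) * e := by nlinarith [hmul, hPe]
    rw [hES β hβ.le hβ1.le]
    rw [show (1:ℝ) - (1 - α) / (α + (1 - 2 * α) * β) =
      (2 * α - 1) * (1 - β) / (α + (1 - 2 * α) * β) by
        rw [eq_div_iff hd.ne', sub_mul, div_mul_cancel₀ _ hd.ne']; ring]
    rw [show (2 * α - 1) * (1 - β) / (α + (1 - 2 * α) * β) * ((1 - β)⁻¹ * Iβ) =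
      ((2 * α - 1) * Iβ) / (α + (1 - 2 * α) * β) by field_simp <;> ring]
    rw [div_le_iff₀ hd]
    linarith [key1]
  -- SECOND INEQUALITY
  set Iα : ℝ := ∫ u in Ioo α 1, q u with hIαdef
  have hqintα : IntegrableOn q (Ioo α 1) := hqint.mono_set (Ioo_subset_Ioo_left hα0.le)
  have hGα : (∫ u in Ioo α 1, (q u - e)) = Iα - (1 - α) * e := by
    rw [integral_sub hqintα (hconst α 1), setIntegral_const,
      Real.volume_real_Ioo_of_le (by linarith), smul_eq_mul]
  have key2 : α * (1 - α) * e ≤ (2 * α - 1) * Iα := by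
    have hmul : (2 * α - 1) * ((1 - α) * P₀) ≤ (2 * α - 1) * (Iα - (1 - α) * e) := by
      rw [← hGα]
      exact mul_le_mul_of_nonneg_left hD hs
    have hPe2 : (2 * α - 1) * ((1 - α) * P₀) = (1 - α) * ((1 - α) * e) := by
      linear_combination (1 - α) * hPe
    nlinarith [hmul, hPe2]
  have goal2 : e ≤ (1 - (1 - α) / α) * ES P L α := by
    rw [hES α hα0.le hα1.le]
    rw [show (1:ℝ) - (1 - α) / α = (2 * α - 1) / α by field_simp <;> ring]
    rw [show (2 * α - 1) / α * ((1 - α)⁻¹ * Iα) = ((2 * α - 1) * Iα) / (α * (1 - α)) by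
      field_simp <;> ring]
    rw [le_div_iff₀ (by positivity : (0:ℝ) < α * (1 - α))]
    linarith [key2]
  -- THIRD INEQUALITY
  have goal3 : (1 - (1 - α) / α) * ES P L α ≤ ES P L ((2 * α - 1) / α) := by
    have hγ0 : (0:ℝ) ≤ (2 * α - 1) / α := div_nonneg hs hα0.le
    have hγα : (2 * α - 1) / α ≤ α := by
      rw [div_le_iff₀ hα0]; nlinarith
    set Zq : ℝ := ∫ u in Ioo (0:ℝ) ((2 * α - 1) / α), q u with hZqdef
    set Xq : ℝ := ∫ u in Ioo ((2 * α - 1) / α) α, q u with hXqdef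
    have hIγs : (∫ u in Ioo ((2 * α - 1) / α) 1, q u) = Xq + Iα :=
      split_lemma hγα hα1.le (hqint.mono_set (Ioo_subset_Ioo_left hγ0))
    have hT0 : Zq + (Xq + Iα) = 0 := by
      rw [← hIγs, ← split_lemma hγ0 (by linarith : (2 * α - 1) / α ≤ 1) hqint]
      exact hT
    have havg : (α - (2 * α - 1) / α) * Zq ≤ ((2 * α - 1) / α) * Xq := by
      have := avg_lemma hmono hqint le_rfl hγ0 hγα hα1.le
      simpa using this
    have havg' : (1 - α) ^ 2 * Zq ≤ (2 * α - 1) * Xq := by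
      have h2 := mul_le_mul_of_nonneg_left havg hα0.le
      have hγval : (2 * α - 1) / α * α = 2 * α - 1 := div_mul_cancel₀ _ hα0.ne'
      have e1 : α * ((α - (2 * α - 1) / α) * Zq) = (1 - α) ^ 2 * Zq := by
        linear_combination (-Zq) * hγval
      have e2 : α * ((2 * α - 1) / α * Xq) = (2 * α - 1) * Xq := by
        linear_combination Xq * hγval
      rw [e1, e2] at h2
      exact h2
    have key3 : (2 * α - 1) * Iα ≤ α ^ 2 * (Xq + Iα) := by
      have hkey3 : α ^ 2 * (Xq + Iα) - (2 * α - 1) * Iα =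
          (2 * α - 1) * Xq - (1 - α) ^ 2 * Zq := by linear_combination (1 - α) ^ 2 * hT0
      linarith [havg', hkey3]
    rw [hES α hα0.le hα1.le, hES ((2 * α - 1) / α) hγ0 (by linarith), hIγs]
    rw [show (1:ℝ) - (1 - α) / α = (2 * α - 1) / α by field_simp <;> ring]
    rw [show ((1:ℝ) - (2 * α - 1) / α)⁻¹ = α / (1 - α) by
      rw [show (1:ℝ) - (2 * α - 1) / α = (1 - α) / α by field_simp; ring, inv_div]]
    rw [show (2 * α - 1) / α * ((1 - α)⁻¹ * Iα) = ((2 * α - 1) * Iα) / (α * (1 - α)) by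
      field_simp <;> ring]
    rw [show α / (1 - α) * (Xq + Iα) = (α ^ 2 * (Xq + Iα)) / (α * (1 - α)) by
      field_simp <;> ring]
    exact (div_le_div_iff_of_pos_right (by positivity)).mpr key3
  exact ⟨goal1, goal2, goal3⟩
end

section
/- Let L be an integrable real random variable on a probability space (Ω,𝓕,P) that is not almost surely constant, and let 1/2 ≤ α < 1. Then every β* in the interval [P[L < e_α(L)], P[L ≤ e_α(L)]] satisfies 0 < β* < 1, and for every such β* it holds that e_α(L) = (1 − (1−α)/(α + (1−2α)β*))·ES_{β*}(L) + ((1−α)/(α + (1−2α)β*))·E[L]. -/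
open MeasureTheory Filter Topology Real Set
open scoped ENNReal

section AuxSeven
open MeasureTheory Filter Topology Real Set
open scoped ENNReal

namespace Aux7

variable {Ω : Type*} [MeasurableSpace Ω] (P : Measure Ω) [IsProbabilityMeasure P] (L : Ω → ℝ)

noncomputable def F (m : ℝ) : ℝ := (P {ω | L ω ≤ m}).toReal

lemma F_mono : Monotone (F P L) := fun a b hab =>
  ENNReal.toReal_mono (measure_ne_top _ _) (measure_mono fun ω (h : L ω ≤ a) => h.trans hab)

lemma F_nonneg (m : ℝ) : 0 ≤ F P L m := ENNReal.toReal_nonneg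

lemma F_le_one (m : ℝ) : F P L m ≤ 1 := by
  have := prob_le_one (μ := P) (s := {ω | L ω ≤ m})
  simpa [F] using ENNReal.toReal_mono ENNReal.one_ne_top this

lemma S_nonempty {u : ℝ} (hu : u < 1) : ∃ m : ℝ, u ≤ F P L m := by
  have hmono : Monotone fun n : ℕ => {ω | L ω ≤ (n : ℝ)} := by
    intro a b hab ω hω
    simp only [mem_setOf_eq] at *
    exact le_trans hω (by exact_mod_cast hab)
  have hU : (⋃ n : ℕ, {ω | L ω ≤ (n : ℝ)}) = univ := by
    ext ω; simp only [mem_iUnion, mem_setOf_eq, mem_univ, iff_true]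
    obtain ⟨n, hn⟩ := exists_nat_ge (L ω)
    exact ⟨n, hn⟩
  have h1 : Tendsto (fun n : ℕ => P {ω | L ω ≤ (n : ℝ)}) atTop (𝓝 1) := by
    have := tendsto_measure_iUnion_atTop (μ := P) hmono
    rwa [hU, measure_univ] at this
  have h2 : Tendsto (fun n : ℕ => F P L n) atTop (𝓝 1) := by
    have : Tendsto (fun n : ℕ => (P {ω | L ω ≤ (n : ℝ)}).toReal) atTop (𝓝 (1 : ℝ≥0∞).toReal) :=
      (ENNReal.tendsto_toReal ENNReal.one_ne_top).comp h1
    simpa [F] using this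
  obtain ⟨n, hn⟩ := (h2.eventually (eventually_gt_nhds hu)).exists
  exact ⟨n, hn.le⟩

lemma exists_F_lt (hm : Measurable L) {u : ℝ} (hu : 0 < u) : ∃ m : ℝ, F P L m < u := by
  have hanti : Antitone fun n : ℕ => {ω | L ω ≤ -(n : ℝ)} := by
    intro a b hab ω hω
    simp only [mem_setOf_eq] at *
    have : (a:ℝ) ≤ (b:ℝ) := by exact_mod_cast hab
    linarith
  have hI : (⋂ n : ℕ, {ω | L ω ≤ -(n : ℝ)}) = (∅ : Set Ω) := by
    ext ω; simp only [mem_iInter, mem_setOf_eq, mem_empty_iff_false, iff_false, not_forall]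
    obtain ⟨n, hn⟩ := exists_nat_gt (-L ω)
    exact ⟨n, by push_neg; linarith⟩
  have h1 : Tendsto (fun n : ℕ => P {ω | L ω ≤ -(n : ℝ)}) atTop (𝓝 0) := by
    have := tendsto_measure_iInter_atTop (μ := P)
      (s := fun n : ℕ => {ω | L ω ≤ -(n : ℝ)})
      (fun n => (hm measurableSet_Iic).nullMeasurableSet) hanti ⟨0, measure_ne_top _ _⟩
    rwa [hI, measure_empty] at this
  have h2 : Tendsto (fun n : ℕ => F P L (-(n : ℝ))) atTop (𝓝 0) := by
    have : Tendsto (fun n : ℕ => (P {ω | L ω ≤ -(n : ℝ)}).toReal) atTop (𝓝 (0 : ℝ≥0∞).toReal) :=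
      (ENNReal.tendsto_toReal ENNReal.zero_ne_top).comp h1
    simpa [F] using this
  obtain ⟨n, hn⟩ := (h2.eventually (eventually_lt_nhds hu)).exists
  exact ⟨-(n : ℝ), hn⟩

lemma bddBelow_S (hm : Measurable L) {u : ℝ} (hu : 0 < u) :
    BddBelow {m : ℝ | u ≤ F P L m} := by
  obtain ⟨m₀, hm₀⟩ := exists_F_lt P L hm hu
  refine ⟨m₀, fun m hmem => ?_⟩
  by_contra h
  push_neg at h
  exact absurd (le_trans hmem (F_mono P L h.le)) (not_le.2 hm₀)

lemma le_F_of_forall (hm : Measurable L) {u t : ℝ}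
    (h : ∀ ε > (0:ℝ), u ≤ F P L (t + ε)) : u ≤ F P L t := by
  have hanti : Antitone fun n : ℕ => {ω | L ω ≤ t + 1 / (n + 1)} := by
    intro a b hab ω hω
    simp only [mem_setOf_eq] at *
    have : (1:ℝ) / (b + 1) ≤ 1 / (a + 1) := by
      apply one_div_le_one_div_of_le (by positivity)
      have : (a:ℝ) ≤ (b:ℝ) := by exact_mod_cast hab
      linarith
    linarith
  have hI : (⋂ n : ℕ, {ω | L ω ≤ t + 1 / (n + 1)}) = {ω | L ω ≤ t} := by
    ext ω
    simp only [mem_iInter, mem_setOf_eq]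
    constructor
    · intro hω
      by_contra hlt
      push_neg at hlt
      obtain ⟨n, hn⟩ := exists_nat_one_div_lt (show (0:ℝ) < L ω - t by linarith)
      linarith [hω n]
    · intro hω n
      have : (0:ℝ) < 1 / (n + 1) := by positivity
      linarith
  have h1 : Tendsto (fun n : ℕ => P {ω | L ω ≤ t + 1 / (n + 1)}) atTop (𝓝 (P {ω | L ω ≤ t})) := by
    have := tendsto_measure_iInter_atTop (μ := P)
      (s := fun n : ℕ => {ω | L ω ≤ t + 1 / (n + 1)})
      (fun n => (hm measurableSet_Iic).nullMeasurableSet) hanti ⟨0, measure_ne_top _ _⟩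
    rwa [hI] at this
  have h2 : Tendsto (fun n : ℕ => F P L (t + 1 / (n + 1))) atTop (𝓝 (F P L t)) :=
    (ENNReal.tendsto_toReal (measure_ne_top _ _)).comp h1
  exact ge_of_tendsto' h2 fun n => h _ (by positivity)

lemma q_le_iff (hm : Measurable L) {u t : ℝ} (h0 : 0 < u) (h1 : u < 1) :
    leftQuantile P L u ≤ t ↔ u ≤ F P L t := by
  constructor
  · intro h
    refine le_F_of_forall P L hm fun ε hε => ?_
    have hlt : sInf {m : ℝ | u ≤ F P L m} < t + ε := lt_of_le_of_lt h (by linarith)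
    obtain ⟨m, hmem, hmlt⟩ := exists_lt_of_csInf_lt ((S_nonempty P L h1).imp fun m h => h) hlt
    exact le_trans hmem (F_mono P L hmlt.le)
  · intro h
    exact csInf_le (bddBelow_S P L hm h0) h





variable {Ω : Type*} [MeasurableSpace Ω] (P : Measure Ω) [IsProbabilityMeasure P] (L : Ω → ℝ)

lemma key (hm : Measurable L) (hL : Integrable L P) (e β : ℝ)
    (hβ0 : 0 < β) (hβ1 : β < 1)
    (hβl : (P {ω | L ω < e}).toReal ≤ β) (hβu : β ≤ F P L e) :
    ∫ u in β..1, leftQuantile P L u = (∫ ω, max (L ω - e) 0 ∂P) + (1 - β) * e := by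
  set q := leftQuantile P L with hq
  set μ := volume.restrict (Ioo β 1) with hμ
  -- monotonicity on Ioo β 1
  have hq_mono : MonotoneOn q (Ioo β 1) := by
    intro u hu v hv huv
    exact csInf_le_csInf (bddBelow_S P L hm (hβ0.trans hu.1))
      ((S_nonempty P L hv.2).imp fun m h => h)
      (fun m h => le_trans huv h)
  -- q u ≥ e on Ioo β 1
  have hq_ge : ∀ u ∈ Ioo β 1, e ≤ q u := by
    intro u hu
    by_contra h
    push_neg at h
    obtain ⟨m, hmem, hmlt⟩ :=
      exists_lt_of_csInf_lt ((S_nonempty P L hu.2).imp fun m h => h) h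
    have h2 : F P L m ≤ (P {ω | L ω < e}).toReal := by
      apply ENNReal.toReal_mono (measure_ne_top _ _)
      exact measure_mono fun ω (hω : L ω ≤ m) => lt_of_le_of_lt hω hmlt
    have := le_trans hmem (le_trans h2 hβl)
    exact absurd this (not_le.2 hu.1)
  have hmeas : AEMeasurable q μ := aemeasurable_restrict_of_monotoneOn measurableSet_Ioo hq_mono
  have hmeas' : AEMeasurable (fun u => q u - e) μ := hmeas.sub aemeasurable_const
  have hnn : 0 ≤ᵐ[μ] fun u => q u - e :=
    (ae_restrict_iff' measurableSet_Ioo).2 (ae_of_all _ fun u hu => sub_nonneg.2 (hq_ge u hu))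
  -- integrability of (L-e)+ and its lintegral
  have hint : Integrable (fun ω => max (L ω - e) 0) P := (hL.sub (integrable_const e)).pos_part
  have hint_nn : 0 ≤ᵐ[P] fun ω => max (L ω - e) 0 := ae_of_all _ fun ω => le_max_right _ _
  have hLmeas : AEMeasurable (fun ω => max (L ω - e) 0) P :=
    ((hm.sub measurable_const).max measurable_const).aemeasurable
  -- layer cake both sides
  have lhs := lintegral_eq_lintegral_meas_lt μ hnn hmeas'
  have rhs := lintegral_eq_lintegral_meas_lt P hint_nn hLmeas
  -- tail measures agree
  have htail : ∀ t ∈ Ioi (0:ℝ),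
      μ {u | t < q u - e} = P {ω | t < max (L ω - e) 0} := by
    intro t ht
    rw [mem_Ioi] at ht
    set c := F P L (e + t) with hc
    have hc_lb : β ≤ c := hβu.trans (F_mono P L (by linarith))
    have hc1 : c ≤ 1 := F_le_one P L _
    have hset : {u | t < q u - e} ∩ Ioo β 1 = Ioo c 1 := by
      ext u
      constructor
      · rintro ⟨hqu, hu⟩
        refine ⟨?_, hu.2⟩
        by_contra hle
        push_neg at hle
        have : q u ≤ e + t :=
          (q_le_iff P L hm (hβ0.trans hu.1) hu.2).2 hle
        simp only [mem_setOf_eq] at hqu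
        linarith
      · intro hu
        have hu' : u ∈ Ioo β 1 := ⟨lt_of_le_of_lt hc_lb hu.1, hu.2⟩
        refine ⟨?_, hu'⟩
        simp only [mem_setOf_eq]
        by_contra hle
        push_neg at hle
        have : u ≤ c := (q_le_iff P L hm (hβ0.trans hu'.1) hu'.2).1 (by linarith)
        exact absurd this (not_le.2 hu.1)
    have h1 : μ {u | t < q u - e} = ENNReal.ofReal (1 - c) := by
      rw [hμ, Measure.restrict_apply' measurableSet_Ioo, hset, Real.volume_Ioo]
    have hset2 : {ω | t < max (L ω - e) 0} = {ω | L ω ≤ e + t}ᶜ := by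
      ext ω
      simp only [mem_setOf_eq, mem_compl_iff, not_le, lt_max_iff]
      constructor
      · rintro (h | h)
        · linarith
        · linarith
      · intro h; left; linarith
    have hms : MeasurableSet {ω | L ω ≤ e + t} := hm measurableSet_Iic
    have h2 : P {ω | t < max (L ω - e) 0} = 1 - P {ω | L ω ≤ e + t} := by
      rw [hset2, measure_compl hms (measure_ne_top _ _), measure_univ]
    rw [h1, h2]
    have hple : P {ω | L ω ≤ e + t} ≤ 1 := prob_le_one
    rw [hc, F]
    rw [← ENNReal.ofReal_toReal (a := 1 - P {ω | L ω ≤ e + t}) (by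
      exact ne_top_of_le_ne_top ENNReal.one_ne_top tsub_le_self)]
    congr 1
    rw [ENNReal.toReal_sub_of_le hple ENNReal.one_ne_top, ENNReal.toReal_one]
  -- combine lintegrals
  have hlin : ∫⁻ u, ENNReal.ofReal (q u - e) ∂μ
      = ∫⁻ ω, ENNReal.ofReal (max (L ω - e) 0) ∂P := by
    rw [lhs, rhs]
    exact setLIntegral_congr_fun measurableSet_Ioi htail
  have hRof : ∫⁻ ω, ENNReal.ofReal (max (L ω - e) 0) ∂P
      = ENNReal.ofReal (∫ ω, max (L ω - e) 0 ∂P) :=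
    (ofReal_integral_eq_lintegral_ofReal hint hint_nn).symm
  -- integrability of q - e on μ
  have hfi : HasFiniteIntegral (fun u => q u - e) μ := by
    rw [hasFiniteIntegral_iff_norm]
    have : ∫⁻ u, ENNReal.ofReal ‖q u - e‖ ∂μ = ∫⁻ u, ENNReal.ofReal (q u - e) ∂μ := by
      apply lintegral_congr_ae
      filter_upwards [hnn] with u hu
      rw [Real.norm_of_nonneg hu]
    rw [this, hlin, hRof]
    exact ENNReal.ofReal_lt_top
  have hq_int : Integrable (fun u => q u - e) μ := ⟨hmeas'.aestronglyMeasurable, hfi⟩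
  -- value of set integral of q - e
  have hval : ∫ u, (q u - e) ∂μ = ∫ ω, max (L ω - e) 0 ∂P := by
    rw [integral_eq_lintegral_of_nonneg_ae hnn hmeas'.aestronglyMeasurable, hlin, hRof]
    exact ENNReal.toReal_ofReal (integral_nonneg fun ω => le_max_right _ _)
  -- assemble
  have hqint : Integrable q μ := by
    exact (hq_int.add (integrable_const e)).congr (ae_of_all _ fun u => by simp)
  have hμuniv : (μ univ).toReal = 1 - β := by
    rw [hμ, Measure.restrict_apply' measurableSet_Ioo, univ_inter, Real.volume_Ioo,
      ENNReal.toReal_ofReal (by linarith)]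
  have hsplit : ∫ u, q u ∂μ = (∫ ω, max (L ω - e) 0 ∂P) + (1 - β) * e := by
    have : ∫ u, q u ∂μ = ∫ u, ((q u - e) + e) ∂μ := by
      congr 1; funext u; ring
    rw [this, integral_add hq_int (integrable_const e), hval, integral_const, measureReal_def, hμuniv,
      smul_eq_mul]
  rw [intervalIntegral.integral_of_le hβ1.le]
  rw [← integral_Ioc_eq_integral_Ioo] at hsplit
  exact hsplit


end Aux7
end AuxSeven

/-- for non-constant `L`, every `β*` in `[P[L < e_α(L)], P[L ≤ e_α(L)]]`
lies strictly between `0` and `1` and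
`e_α(L) = (1 - (1-α)/(α+(1-2α)β*))·ES_{β*}(L) + ((1-α)/(α+(1-2α)β*))·E[L]`. -/
theorem expectile_eq_expectedShortfall {Ω : Type*} [MeasurableSpace Ω] (P : Measure Ω)
    [IsProbabilityMeasure P] (L : Ω → ℝ) (hL : Integrable L P)
    (hnc : ¬ ∃ c : ℝ, ∀ᵐ ω ∂P, L ω = c)
    (α : ℝ) (hα : 1 / 2 ≤ α) (hα1 : α < 1) (e : ℝ) (he : IsExpectile P L α e)
    (β : ℝ) (hβl : (P {ω | L ω < e}).toReal ≤ β) (hβu : β ≤ (P {ω | L ω ≤ e}).toReal) :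
    0 < β ∧ β < 1 ∧
      e = (1 - (1 - α) / (α + (1 - 2 * α) * β)) * ES P L β +
        ((1 - α) / (α + (1 - 2 * α) * β)) * ∫ ω, L ω ∂P := by
  classical
  -- measurable representative
  set L' := hL.1.mk L with hL'def
  have hae : L =ᵐ[P] L' := hL.1.ae_eq_mk
  have hm : Measurable L' := hL.1.stronglyMeasurable_mk.measurable
  have hL' : Integrable L' P := hL.congr hae
  have hsetle : ∀ m : ℝ, P {ω | L ω ≤ m} = P {ω | L' ω ≤ m} := fun m =>
    measure_congr (Filter.eventuallyEq_set.2 (hae.mono fun ω h => by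
      simp only [mem_setOf_eq, h]))
  have hsetlt : ∀ m : ℝ, P {ω | L ω < m} = P {ω | L' ω < m} := fun m =>
    measure_congr (Filter.eventuallyEq_set.2 (hae.mono fun ω h => by
      simp only [mem_setOf_eq, h]))
  have hquant : leftQuantile P L = leftQuantile P L' := by
    funext u
    unfold leftQuantile
    congr 1
    ext m
    rw [mem_setOf_eq, mem_setOf_eq, hsetle m]
  have hintL : ∫ ω, L ω ∂P = ∫ ω, L' ω ∂P := integral_congr_ae hae
  have hnc' : ¬ ∃ c : ℝ, ∀ᵐ ω ∂P, L' ω = c := by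
    rintro ⟨c, hc⟩
    exact hnc ⟨c, hae.trans hc⟩
  -- positive and negative parts
  set Sp := ∫ ω, max (L' ω - e) 0 ∂P with hSp
  set Sn := ∫ ω, max (e - L' ω) 0 ∂P with hSn
  have hSpInt : Integrable (fun ω => max (L' ω - e) 0) P := (hL'.sub (integrable_const e)).pos_part
  have hSnInt : Integrable (fun ω => max (e - L' ω) 0) P :=
    ((integrable_const e).sub hL').pos_part
  have hS : α * Sp = (1 - α) * Sn := by
    have h1 : ∫ ω, max (L ω - e) 0 ∂P = Sp :=
      integral_congr_ae (hae.mono fun ω h => by dsimp only; rw [h])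
    have h2 : ∫ ω, max (e - L ω) 0 ∂P = Sn :=
      integral_congr_ae (hae.mono fun ω h => by dsimp only; rw [h])
    rw [← h1, ← h2]
    exact he
  -- if both parts vanish, L' is a.e. constant
  have hconst : Sp = 0 → Sn = 0 → False := by
    intro hp hn
    apply hnc'
    refine ⟨e, ?_⟩
    have h1 : (fun ω => max (L' ω - e) 0) =ᵐ[P] 0 :=
      (integral_eq_zero_iff_of_nonneg (f := fun ω => max (L' ω - e) 0) (fun ω => le_max_right _ _) hSpInt).1 hp
    have h2 : (fun ω => max (e - L' ω) 0) =ᵐ[P] 0 :=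
      (integral_eq_zero_iff_of_nonneg (f := fun ω => max (e - L' ω) 0) (fun ω => le_max_right _ _) hSnInt).1 hn
    filter_upwards [h1, h2] with ω hω1 hω2
    simp only [Pi.zero_apply] at hω1 hω2
    have ha : L' ω - e ≤ 0 := max_eq_right_iff.1 hω1
    have hb : e - L' ω ≤ 0 := max_eq_right_iff.1 hω2
    linarith
  have hα0 : (0:ℝ) < α := by linarith
  have hα1' : (0:ℝ) < 1 - α := by linarith
  -- β > 0
  have hβ0 : 0 < β := by
    rcases eq_or_ne (P {ω | L' ω < e}) 0 with h0 | h0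
    · exfalso
      have hael : ∀ᵐ ω ∂P, e ≤ L' ω := by
        rw [ae_iff]
        have hseteq : {a | ¬ e ≤ L' a} = {ω | L' ω < e} := by ext ω; simp [not_le]
        rw [hseteq, h0]
      have hn0 : Sn = 0 := by
        rw [hSn]
        rw [integral_eq_zero_iff_of_nonneg (f := fun ω => max (e - L' ω) 0) (fun ω => le_max_right _ _) hSnInt]
        filter_upwards [hael] with ω hω
        simp only [Pi.zero_apply]
        exact max_eq_right (by linarith)
      have hp0 : Sp = 0 := by
        have : α * Sp = 0 := by rw [hS, hn0, mul_zero]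
        exact (mul_eq_zero.1 this).resolve_left (ne_of_gt hα0)
      exact hconst hp0 hn0
    · have : 0 < (P {ω | L' ω < e}).toReal :=
        ENNReal.toReal_pos h0 (measure_ne_top _ _)
      calc (0:ℝ) < (P {ω | L' ω < e}).toReal := this
        _ = (P {ω | L ω < e}).toReal := by rw [hsetlt]
        _ ≤ β := hβl
  -- β < 1
  have hβ1 : β < 1 := by
    rcases eq_or_ne (P {ω | L' ω ≤ e}) 1 with h1 | h1
    · exfalso
      have haeu : ∀ᵐ ω ∂P, L' ω ≤ e := by
        have hms : MeasurableSet {ω | L' ω ≤ e} := hm measurableSet_Iic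
        rw [ae_iff]
        have hseteq : {a | ¬ L' a ≤ e} = {ω | L' ω ≤ e}ᶜ := by ext ω; simp [not_le]
        rw [hseteq, measure_compl hms (measure_ne_top _ _), measure_univ, h1, tsub_self]
      have hp0 : Sp = 0 := by
        rw [hSp, integral_eq_zero_iff_of_nonneg (f := fun ω => max (L' ω - e) 0) (fun ω => le_max_right _ _) hSpInt]
        filter_upwards [haeu] with ω hω
        simp only [Pi.zero_apply]
        exact max_eq_right (by linarith)
      have hn0 : Sn = 0 := by
        have : (1 - α) * Sn = 0 := by rw [← hS, hp0, mul_zero]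
        exact (mul_eq_zero.1 this).resolve_left (ne_of_gt hα1')
      exact hconst hp0 hn0
    · have hlt : P {ω | L' ω ≤ e} < 1 := lt_of_le_of_ne prob_le_one h1
      calc β ≤ (P {ω | L ω ≤ e}).toReal := hβu
        _ = (P {ω | L' ω ≤ e}).toReal := by rw [hsetle]
        _ < 1 := by
            rw [show (1:ℝ) = (1:ℝ≥0∞).toReal from ENNReal.toReal_one.symm]
            exact (ENNReal.toReal_lt_toReal (measure_ne_top P _) ENNReal.one_ne_top).2 hlt
  refine ⟨hβ0, hβ1, ?_⟩
  -- key integral identity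
  have hkey := Aux7.key P L' hm hL' e β hβ0 hβ1
    (by rw [← hsetlt]; exact hβl)
    (by rw [Aux7.F, ← hsetle]; exact hβu)
  -- ES value
  have hES : ES P L β = (1 - β)⁻¹ * (Sp + (1 - β) * e) := by
    rw [ES, hquant, hkey, hSp]
  -- mean value
  have hmean : ∫ ω, L' ω ∂P = Sp - Sn + e := by
    have hdiff : ∀ ω, L' ω - e = max (L' ω - e) 0 - max (e - L' ω) 0 := by
      intro ω
      rcases le_total (L' ω) e with h | h
      · rw [max_eq_right (by linarith), max_eq_left (by linarith)]; ring
      · rw [max_eq_left (by linarith), max_eq_right (by linarith)]; ring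
    have h1 : ∫ ω, (L' ω - e) ∂P = Sp - Sn := by
      rw [show (fun ω => L' ω - e) = fun ω => max (L' ω - e) 0 - max (e - L' ω) 0 from
        funext hdiff, integral_sub hSpInt hSnInt]
    have h2 : ∫ ω, (L' ω - e) ∂P = (∫ ω, L' ω ∂P) - e := by
      rw [integral_sub hL' (integrable_const e), integral_const, measureReal_def, measure_univ]
      simp
    linarith [h1, h2]
  rw [hintL, hmean, hES]
  have hD : 0 < α + (1 - 2 * α) * β := by nlinarith
  have h1β : (1:ℝ) - β ≠ 0 := by linarith
  field_simp
  ring_nf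
  have hD2 : β - β * α * 2 + α ≠ 0 := by nlinarith
  have hinv : (β - β * α * 2 + α)⁻¹ * (β - β * α * 2 + α) = 1 := inv_mul_cancel₀ hD2
  linear_combination (-(β - β * α * 2 + α)⁻¹ * (1 - β)) * hS + Sp * hinv
end
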